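/- arXiv:1401.3611 — 5 statements merged into one kernel-verified Lean document; each statement's English description precedes it below -/
import Mathlib

section
/- There is a universal constant C > 0 such that for all real numbers u, v, the integral (1/π)·∫₀^π exp(−(u − v·cos s)²) ds is at most C / sqrt((|u + v| + 1)·(|u − v| + 1)). -/
set_option maxHeartbeats 1000000
open Real MeasureTheory

namespace ExpIntAux

lemma cont_main (u v : ℝ) : Continuous fun s : ℝ => (1 + (u - v * Real.cos s)^2)⁻¹ := by
  apply Continuous.inv₀
  · continuity
  · intro s; positivity

lemma intg_main (u v a b : ℝ) :
    IntervalIntegrable (fun s : ℝ => (1 + (u - v * Real.cos s)^2)⁻¹) volume a b :=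
  (cont_main u v).intervalIntegrable a b

lemma exp_le (x : ℝ) : Real.exp (-x^2) ≤ (1 + x^2)⁻¹ := by
  rw [Real.exp_neg]
  have h := Real.add_one_le_exp (x^2)
  have h1 : (0:ℝ) < 1 + x^2 := by positivity
  apply inv_anti₀ h1
  linarith

lemma sin_lower {c x : ℝ} (hc : 0 < c) (hcpi : c ≤ π) (hx : 0 ≤ x) (hxc : x ≤ c) :
    Real.sin c / c * x ≤ Real.sin x := by
  have h := (strictConcaveOn_sin_Icc.concaveOn).2 ⟨hc.le, hcpi⟩
    ⟨le_rfl, Real.pi_pos.le⟩ (div_nonneg hx hc.le)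
    (sub_nonneg.2 (div_le_one_of_le₀ hxc hc.le)) (by ring : x/c + (1 - x/c) = 1)
  have hxx : x / c * c = x := div_mul_cancel₀ _ hc.ne'
  simp only [smul_eq_mul, Real.sin_zero, mul_zero, add_zero, hxx] at h
  calc Real.sin c / c * x = x/c * Real.sin c := by ring
  _ ≤ Real.sin x := h

lemma sin_sq_half (x : ℝ) : Real.sin (x/2)^2 = (1 - Real.cos x)/2 := by
  have := Real.sin_sq_eq_half_sub (x/2)
  rw [show 2*(x/2) = x by ring] at this
  linarith

lemma one_sub_cos_lb {s : ℝ} (h0 : 0 ≤ s) (h1 : s ≤ π) :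
    2 * s^2 / π^2 ≤ 1 - Real.cos s := by
  have hj : 2 / π * (s/2) ≤ Real.sin (s/2) :=
    Real.mul_le_sin (by linarith) (by linarith)
  have hs : Real.sin (s/2)^2 = (1 - Real.cos s)/2 := sin_sq_half s
  have hpi := Real.pi_pos
  have h2 : (2 / π * (s/2))^2 ≤ Real.sin (s/2)^2 :=
    pow_le_pow_left₀ (by positivity) hj 2
  rw [hs] at h2
  have e : (2/π*(s/2))^2 = s^2/π^2 := by
    field_simp
  rw [e] at h2
  rw [show 2*s^2/π^2 = 2*(s^2/π^2) by ring]
  linarith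

lemma one_sub_cos_ub (s : ℝ) : 1 - Real.cos s ≤ s^2/2 := by
  have := Real.one_sub_sq_div_two_le_cos (x := s)
  linarith

lemma pi_sq_le16 : π^2 ≤ 16 := by nlinarith [Real.pi_le_four, Real.pi_pos.le]

lemma nine_le_pi_sq : (9:ℝ) ≤ π^2 := by nlinarith [Real.pi_gt_three]

lemma abs_sin_eq {y : ℝ} (hy : |y| ≤ π) : |Real.sin y| = Real.sin |y| := by
  rcases le_or_gt 0 y with h|h
  · rw [abs_of_nonneg h,
      abs_of_nonneg (Real.sin_nonneg_of_nonneg_of_le_pi h (by rwa [abs_of_nonneg h] at hy))]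
  · rw [abs_of_neg h, ← abs_neg, ← Real.sin_neg,
      abs_of_nonneg (Real.sin_nonneg_of_nonneg_of_le_pi (by linarith) (by rwa [abs_of_neg h] at hy))]

lemma cos_dist_lb {s₀ s : ℝ} (h₀0 : 0 ≤ s₀) (h₀ : s₀ ≤ π/2) (hs0 : 0 ≤ s) (hs : s ≤ 2*π/3) :
    (s + s₀) * |s - s₀| / π^2 ≤ |Real.cos s - Real.cos s₀| := by
  have hpi := Real.pi_pos
  rw [Real.cos_sub_cos]
  set X := (s + s₀)/2 with hXdef
  set Y := (s - s₀)/2 with hYdef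
  have hX0 : 0 ≤ X := by rw [hXdef]; linarith
  have hX2 : X ≤ 2*π/3 := by rw [hXdef]; linarith
  have hsl := sin_lower (c := 2*π/3) (x := X) (by linarith) (by linarith) hX0 hX2
  have hs23 : Real.sin (2*π/3) = Real.sqrt 3 / 2 := by
    rw [show 2*π/3 = π - π/3 by ring, Real.sin_pi_sub, Real.sin_pi_div_three]
  have htabs : |Y| = |s - s₀|/2 := by
    rw [hYdef, abs_div]
    norm_num
  have htle : |s - s₀| ≤ 2*π/3 := abs_le.2 ⟨by linarith, by linarith⟩
  have hYabs : |Real.sin Y| = Real.sin |Y| := abs_sin_eq (by rw [htabs]; linarith)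
  have hsinY : 2/π * |Y| ≤ Real.sin |Y| :=
    Real.mul_le_sin (abs_nonneg _) (by rw [htabs]; linarith)
  have habs : |(-2) * Real.sin X * Real.sin Y| = 2 * Real.sin X * |Real.sin Y| := by
    rw [abs_mul, abs_mul]
    have : |(-2:ℝ)| = 2 := by norm_num
    rw [this, abs_of_nonneg (Real.sin_nonneg_of_nonneg_of_le_pi hX0 (by linarith))]
  rw [habs, hYabs, htabs]
  have h3 : (4:ℝ)/3 ≤ Real.sqrt 3 := by
    rw [show (3:ℝ) = ((4:ℝ)/3)^2 * (27/16) by norm_num, Real.sqrt_mul (by positivity),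
      Real.sqrt_sq (by norm_num)]
    nlinarith [Real.sqrt_nonneg (27/16 : ℝ), Real.sq_sqrt (show (0:ℝ) ≤ 27/16 by norm_num)]
  have hsX : Real.sqrt 3 / 2 / (2*π/3) * X ≤ Real.sin X := by rwa [hs23] at hsl
  have hsinX0 : (0:ℝ) ≤ Real.sin X := Real.sin_nonneg_of_nonneg_of_le_pi hX0 (by linarith)
  calc (s + s₀) * |s - s₀| / π^2
      ≤ 2 * (Real.sqrt 3 / 2 / (2*π/3) * X) * (2/π * (|s - s₀|/2)) := by
        rw [hXdef]
        have h0 : 0 ≤ |s - s₀| := abs_nonneg _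
        rw [div_le_iff₀ (by positivity)]
        have : 2 * (Real.sqrt 3 / 2 / (2*π/3) * ((s+s₀)/2)) * (2/π * (|s - s₀|/2)) * π^2
            = (3*Real.sqrt 3/4) * ((s+s₀) * |s - s₀|) := by
          field_simp
          ring
        rw [this]
        nlinarith [mul_nonneg (by linarith : (0:ℝ) ≤ s + s₀) h0]
    _ ≤ 2 * Real.sin X * (2/π * (|s - s₀|/2)) := by
        apply mul_le_mul_of_nonneg_right _ (by positivity)
        linarith
    _ ≤ 2 * Real.sin X * Real.sin (|s - s₀|/2) := by
        apply mul_le_mul_of_nonneg_left _ (by linarith)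
        rw [← htabs]
        rw [htabs] at hsinY ⊢
        exact hsinY

lemma contOn_inv_sq {s₀ c d : ℝ} (h : ∀ s ∈ Set.uIcc c d, s ≠ s₀) :
    ContinuousOn (fun s : ℝ => ((s - s₀)^2)⁻¹) (Set.uIcc c d) := by
  apply ContinuousOn.inv₀
  · fun_prop
  · intro s hs
    have hne : s - s₀ ≠ 0 := sub_ne_zero.2 (h s hs)
    positivity

lemma integral_inv_sq {s₀ c d : ℝ} (h : ∀ s ∈ Set.uIcc c d, s ≠ s₀) :
    ∫ s in c..d, ((s - s₀)^2)⁻¹ = (c - s₀)⁻¹ - (d - s₀)⁻¹ := by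
  have hd : ∀ s ∈ Set.uIcc c d, HasDerivAt (fun x => -(x - s₀)⁻¹) ((s - s₀)^2)⁻¹ s := by
    intro s hs
    have hne : s - s₀ ≠ 0 := sub_ne_zero.2 (h s hs)
    have h1 : HasDerivAt (fun x : ℝ => x - s₀) 1 s := (hasDerivAt_id s).sub_const s₀
    have h2 : HasDerivAt (fun x => -(x - s₀)⁻¹) _ s := (h1.inv hne).neg
    convert h2 using 1
    field_simp
  have hint : IntervalIntegrable (fun s : ℝ => ((s - s₀)^2)⁻¹) volume c d :=
    (contOn_inv_sq h).intervalIntegrable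
  rw [intervalIntegral.integral_eq_sub_of_hasDerivAt hd hint]
  ring

lemma integral_inv_pow4 {s₀ c d : ℝ} (h : ∀ s ∈ Set.uIcc c d, s ≠ s₀) :
    ∫ s in c..d, ((s - s₀)^4)⁻¹ = (3*(c - s₀)^3)⁻¹ - (3*(d - s₀)^3)⁻¹ := by
  have hd : ∀ s ∈ Set.uIcc c d, HasDerivAt (fun x => -(3*(x - s₀)^3)⁻¹) ((s - s₀)^4)⁻¹ s := by
    intro s hs
    have hne : s - s₀ ≠ 0 := sub_ne_zero.2 (h s hs)
    have h1 : HasDerivAt (fun x : ℝ => x - s₀) 1 s := (hasDerivAt_id s).sub_const s₀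
    have h2 : HasDerivAt (fun x : ℝ => 3*(x - s₀)^3) (3*(3*(s-s₀)^2*1)) s := ((h1.pow 3).const_mul 3)
    have h3 : HasDerivAt (fun x => -(3*(x - s₀)^3)⁻¹) _ s := (h2.inv (by positivity)).neg
    convert h3 using 1
    field_simp
  have hint : IntervalIntegrable (fun s : ℝ => ((s - s₀)^4)⁻¹) volume c d := by
    apply ContinuousOn.intervalIntegrable
    apply ContinuousOn.inv₀
    · fun_prop
    · intro s hs
      have hne : s - s₀ ≠ 0 := sub_ne_zero.2 (h s hs)
      positivity
  rw [intervalIntegral.integral_eq_sub_of_hasDerivAt hd hint]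
  ring

lemma piece_le_const {g : ℝ → ℝ} {c d M : ℝ} (hcd : c ≤ d)
    (hg : IntervalIntegrable g volume c d) (h : ∀ s ∈ Set.Icc c d, g s ≤ M) :
    ∫ s in c..d, g s ≤ (d - c) * M := by
  have := intervalIntegral.integral_mono_on hcd hg (intervalIntegrable_const (c := M)) h
  rwa [intervalIntegral.integral_const, smul_eq_mul] at this

lemma finishing {J P Q : ℝ} (hJ0 : 0 ≤ J) (hP : 0 < P) (hQ : 0 < Q) (hPQ : P ≤ Q^2)
    (h : J * Q ≤ 900) : J ≤ 900 / Real.sqrt P := by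
  have hD0 : 0 < Real.sqrt P := Real.sqrt_pos.2 hP
  have hDQ : Real.sqrt P ≤ Q := by
    calc Real.sqrt P ≤ Real.sqrt (Q^2) := Real.sqrt_le_sqrt hPQ
    _ = Q := Real.sqrt_sq hQ.le
  rw [le_div_iff₀ hD0]
  calc J * Real.sqrt P ≤ J * Q := by apply mul_le_mul_of_nonneg_left hDQ hJ0
  _ ≤ 900 := h

lemma J_nonneg (u v : ℝ) : 0 ≤ ∫ s in (0:ℝ)..π, (1 + (u - v * Real.cos s)^2)⁻¹ :=
  intervalIntegral.integral_nonneg Real.pi_pos.le (fun s _ => by positivity)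

lemma inv_main_le_one (u v s : ℝ) : (1 + (u - v * Real.cos s)^2)⁻¹ ≤ 1 := by
  rw [show (1:ℝ) = 1⁻¹ by norm_num]
  apply inv_anti₀ (by norm_num)
  nlinarith [sq_nonneg (u - v * Real.cos s)]

lemma J_le_pi (u v : ℝ) : ∫ s in (0:ℝ)..π, (1 + (u - v * Real.cos s)^2)⁻¹ ≤ π := by
  have h := piece_le_const (c := 0) (d := π) Real.pi_pos.le (intg_main u v 0 π)
    (fun s _ => inv_main_le_one u v s)
  simpa using h

lemma key_triv (u v Q : ℝ) (hQ : 0 < Q) (hπQ : π * Q ≤ 900)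
    (hP0 : 0 < (u + v + 1) * (|u - v| + 1)) (hP : (u + v + 1) * (|u - v| + 1) ≤ Q^2) :
    ∫ s in (0:ℝ)..π, (1 + (u - v * Real.cos s)^2)⁻¹
      ≤ 900 / Real.sqrt ((u + v + 1) * (|u - v| + 1)) := by
  apply finishing (J_nonneg u v) hP0 hQ hP
  calc (∫ s in (0:ℝ)..π, (1 + (u - v * Real.cos s)^2)⁻¹) * Q ≤ π * Q :=
        mul_le_mul_of_nonneg_right (J_le_pi u v) hQ.le
  _ ≤ 900 := hπQ

lemma key_branch2 (u v : ℝ) (hu : 0 ≤ u) (huv : u < v) (h2v : 36 < v) :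
    ∫ s in (0:ℝ)..π, (1 + (u - v * Real.cos s)^2)⁻¹
      ≤ 900 / Real.sqrt ((u + v + 1) * (|u - v| + 1)) := by
  have hpi := Real.pi_pos
  have hpi4 := Real.pi_le_four
  have hpi3 := Real.pi_gt_three
  have hv0 : 0 < v := by linarith
  have hBeq : |u - v| = v - u := by rw [abs_sub_comm]; exact abs_of_nonneg (by linarith)
  have hP0 : 0 < (u + v + 1) * (|u - v| + 1) := by positivity
  obtain ⟨w, hw0, hw2⟩ : ∃ w : ℝ, 0 < w ∧ w^2 = v :=
    ⟨Real.sqrt v, Real.sqrt_pos.2 hv0, Real.sq_sqrt hv0.le⟩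
  have hw6 : 6 < w := by nlinarith
  have hc00 : 0 ≤ u/v := by positivity
  have hc01 : u/v < 1 := (div_lt_one hv0).2 huv
  obtain ⟨s₀, hs₀0, hs₀π2, hcos⟩ :
      ∃ s₀ : ℝ, 0 ≤ s₀ ∧ s₀ ≤ π/2 ∧ Real.cos s₀ = u/v :=
    ⟨Real.arccos (u/v), Real.arccos_nonneg _, Real.arccos_le_pi_div_two.2 hc00,
      Real.cos_arccos (by linarith) hc01.le⟩
  have hueq : u = v * Real.cos s₀ := by rw [hcos]; field_simp
  have hsq : ∀ s, 0 ≤ s → s ≤ 2*π/3 →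
      (v * ((s+s₀) * |s-s₀| / π^2))^2 ≤ (u - v*Real.cos s)^2 := by
    intro s h1 h2
    have hd := cos_dist_lb hs₀0 hs₀π2 h1 h2
    have h3 : v * ((s+s₀)*|s-s₀|/π^2) ≤ v * |Real.cos s - Real.cos s₀| :=
      mul_le_mul_of_nonneg_left hd hv0.le
    have h4 : v * |Real.cos s - Real.cos s₀| = |u - v*Real.cos s| := by
      rw [← abs_of_pos hv0, ← abs_mul,
        show v*(Real.cos s - Real.cos s₀) = -(u - v*Real.cos s) from by rw [hueq]; ring,
        abs_neg, abs_of_pos hv0]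
    calc (v * ((s+s₀) * |s-s₀| / π^2))^2 ≤ |u - v*Real.cos s|^2 :=
          pow_le_pow_left₀ (by positivity) (h3.trans h4.le) 2
      _ = (u - v*Real.cos s)^2 := sq_abs _
  have h2pi3 : 2*π/3 ≤ π := by linarith
  have hp4ptw : ∀ s ∈ Set.Icc (2*π/3) π,
      (1 + (u - v*Real.cos s)^2)⁻¹ ≤ (1 + v^2/4)⁻¹ := by
    intro s hs
    have hcc : Real.cos s ≤ Real.cos (2*π/3) :=
      Real.cos_le_cos_of_nonneg_of_le_pi (by positivity) hs.2 hs.1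
    rw [show (2:ℝ)*π/3 = π - π/3 by ring, Real.cos_pi_sub, Real.cos_pi_div_three] at hcc
    have hvc : v * Real.cos s ≤ v * (-(1/2)) := mul_le_mul_of_nonneg_left hcc hv0.le
    have hf : v/2 ≤ u - v * Real.cos s := by linarith
    apply inv_anti₀ (by positivity)
    nlinarith
  have hp4 : (∫ s in (2*π/3)..π, (1 + (u - v*Real.cos s)^2)⁻¹)
      ≤ (π - 2*π/3) * (1 + v^2/4)⁻¹ :=
    piece_le_const h2pi3 (intg_main u v _ _) hp4ptw
  have hp4' : (π - 2*π/3) * (1 + v^2/4)⁻¹ ≤ (π/3) * (v^2/4)⁻¹ := by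
    have h1 := inv_anti₀ (by positivity : (0:ℝ) < v^2/4) (by nlinarith : v^2/4 ≤ 1 + v^2/4)
    have h30 : (0:ℝ) ≤ π/3 := by positivity
    calc (π - 2*π/3) * (1 + v^2/4)⁻¹ = (π/3) * (1 + v^2/4)⁻¹ := by ring
      _ ≤ (π/3) * (v^2/4)⁻¹ := mul_le_mul_of_nonneg_left h1 h30
  have hσ0 : 0 < π/w := by positivity
  have hσ6 : π/w ≤ π/6 := by
    rw [div_le_div_iff₀ hw0 (by norm_num : (0:ℝ) < 6)]
    nlinarith
  rcases le_or_gt (π/w) s₀ with h2i | h2ii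
  · -- Subcase 2-i : π/w ≤ s₀
    have hs₀pos : 0 < s₀ := lt_of_lt_of_le hσ0 h2i
    have hm0 : 0 < v * s₀ := by positivity
    obtain ⟨hh, hh0, hhdef⟩ : ∃ hh : ℝ, 0 < hh ∧ hh = π^2/(v*s₀) :=
      ⟨π^2/(v*s₀), by positivity, rfl⟩
    have hπw : π * w ≤ v * s₀ := by
      have h1 : v * (π/w) ≤ v * s₀ := mul_le_mul_of_nonneg_left h2i hv0.le
      have h2 : v * (π/w) = π * w := by
        rw [← hw2]; field_simp
      linarith
    have hhσ : hh ≤ π/w := by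
      rw [hhdef, div_le_div_iff₀ hm0 hw0]
      have := mul_le_mul_of_nonneg_left hπw hpi.le
      nlinarith
    have hhs₀ : hh ≤ s₀ := hhσ.trans h2i
    have hc1 : 0 ≤ s₀ - hh := by linarith
    have hc2 : s₀ + hh ≤ 2*π/3 := by
      have := hhσ.trans hσ6
      linarith
    obtain ⟨k, hk0, hkdef⟩ : ∃ k : ℝ, 0 < k ∧ k = v*s₀/π^2 :=
      ⟨v*s₀/π^2, by positivity, rfl⟩
    have htail : ∀ s, 0 ≤ s → s ≤ 2*π/3 → s ≠ s₀ →
        (1 + (u - v * Real.cos s)^2)⁻¹ ≤ (k^2)⁻¹ * ((s - s₀)^2)⁻¹ := by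
      intro s h1 h2 h3
      have hq := hsq s h1 h2
      have h5 : k * |s-s₀| ≤ v * ((s+s₀) * |s-s₀| / π^2) := by
        rw [hkdef, div_mul_eq_mul_div, mul_comm (v*s₀) |s-s₀|, ← mul_div_assoc]
        apply div_le_div_of_nonneg_right ?_ (by positivity)
        nlinarith [mul_nonneg (mul_nonneg hv0.le (abs_nonneg (s-s₀))) h1]
      have h6 : (k * |s-s₀|)^2 ≤ (u - v*Real.cos s)^2 := by
        have := pow_le_pow_left₀ (by positivity) h5 2
        linarith
      have h7 : (k*|s-s₀|)^2 = k^2 * (s-s₀)^2 := by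
        rw [mul_pow, sq_abs]
      have h9 : k^2 * (s-s₀)^2 ≤ 1 + (u - v*Real.cos s)^2 := by
        rw [← h7]; nlinarith
      have h8 : (0:ℝ) < k^2 * (s-s₀)^2 := by
        have hne : s - s₀ ≠ 0 := sub_ne_zero.2 h3
        positivity
      have := inv_anti₀ h8 h9
      rwa [mul_inv] at this
    have hne1 : ∀ s ∈ Set.uIcc (0:ℝ) (s₀ - hh), s ≠ s₀ := by
      rw [Set.uIcc_of_le hc1]
      intro s hs
      exact ne_of_lt (by linarith [hs.2])
    have hmaj1 : IntervalIntegrable (fun s : ℝ => (k^2)⁻¹ * ((s - s₀)^2)⁻¹) volume 0 (s₀-hh) :=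
      ((contOn_inv_sq hne1).intervalIntegrable).const_mul _
    have hp1 : (∫ s in (0:ℝ)..(s₀-hh), (1 + (u - v * Real.cos s)^2)⁻¹)
        ≤ (k^2)⁻¹ * ((0 - s₀)⁻¹ - (s₀ - hh - s₀)⁻¹) := by
      calc (∫ s in (0:ℝ)..(s₀-hh), (1 + (u - v * Real.cos s)^2)⁻¹)
          ≤ ∫ s in (0:ℝ)..(s₀-hh), (k^2)⁻¹ * ((s - s₀)^2)⁻¹ := by
            apply intervalIntegral.integral_mono_on hc1 (intg_main u v _ _) hmaj1
            intro s hs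
            exact htail s hs.1 (by linarith [hs.2]) (ne_of_lt (by linarith [hs.2]))
        _ = (k^2)⁻¹ * ((0 - s₀)⁻¹ - (s₀ - hh - s₀)⁻¹) := by
            rw [intervalIntegral.integral_const_mul, integral_inv_sq hne1]
    have hp1' : (k^2)⁻¹ * ((0 - s₀)⁻¹ - (s₀ - hh - s₀)⁻¹) ≤ (k^2)⁻¹ * hh⁻¹ := by
      apply mul_le_mul_of_nonneg_left ?_ (by positivity)
      have e1 : (0 - s₀)⁻¹ = -s₀⁻¹ := by rw [zero_sub, inv_neg]
      have e2 : (s₀ - hh - s₀)⁻¹ = -hh⁻¹ := by rw [show s₀ - hh - s₀ = -hh by ring, inv_neg]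
      rw [e1, e2]
      have : 0 ≤ s₀⁻¹ := by positivity
      linarith
    have hp2 : (∫ s in (s₀-hh)..(s₀+hh), (1 + (u - v * Real.cos s)^2)⁻¹)
        ≤ (s₀ + hh - (s₀ - hh)) * 1 :=
      piece_le_const (by linarith) (intg_main u v _ _)
        (fun s _ => inv_main_le_one u v s)
    have hne3 : ∀ s ∈ Set.uIcc (s₀+hh) (2*π/3), s ≠ s₀ := by
      rw [Set.uIcc_of_le hc2]
      intro s hs
      exact ne_of_gt (by linarith [hs.1])
    have hmaj3 : IntervalIntegrable (fun s : ℝ => (k^2)⁻¹ * ((s - s₀)^2)⁻¹) volume (s₀+hh) (2*π/3) :=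
      ((contOn_inv_sq hne3).intervalIntegrable).const_mul _
    have hp3 : (∫ s in (s₀+hh)..(2*π/3), (1 + (u - v * Real.cos s)^2)⁻¹)
        ≤ (k^2)⁻¹ * ((s₀ + hh - s₀)⁻¹ - (2*π/3 - s₀)⁻¹) := by
      calc (∫ s in (s₀+hh)..(2*π/3), (1 + (u - v * Real.cos s)^2)⁻¹)
          ≤ ∫ s in (s₀+hh)..(2*π/3), (k^2)⁻¹ * ((s - s₀)^2)⁻¹ := by
            apply intervalIntegral.integral_mono_on hc2 (intg_main u v _ _) hmaj3
            intro s hs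
            exact htail s (by linarith [hs.1]) hs.2 (ne_of_gt (by linarith [hs.1]))
        _ = (k^2)⁻¹ * ((s₀ + hh - s₀)⁻¹ - (2*π/3 - s₀)⁻¹) := by
            rw [intervalIntegral.integral_const_mul, integral_inv_sq hne3]
    have hp3' : (k^2)⁻¹ * ((s₀ + hh - s₀)⁻¹ - (2*π/3 - s₀)⁻¹) ≤ (k^2)⁻¹ * hh⁻¹ := by
      apply mul_le_mul_of_nonneg_left ?_ (by positivity)
      have e1 : (s₀ + hh - s₀)⁻¹ = hh⁻¹ := by rw [show s₀ + hh - s₀ = hh by ring]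
      have h2 : (0:ℝ) ≤ (2*π/3 - s₀)⁻¹ := by
        have h3 : (0:ℝ) < 2*π/3 - s₀ := by linarith
        positivity
      rw [e1]
      linarith
    have e1 := intervalIntegral.integral_add_adjacent_intervals
      (intg_main u v 0 (s₀-hh)) (intg_main u v (s₀-hh) (s₀+hh))
    have e2 := intervalIntegral.integral_add_adjacent_intervals
      (intg_main u v 0 (s₀+hh)) (intg_main u v (s₀+hh) (2*π/3))
    have e3 := intervalIntegral.integral_add_adjacent_intervals
      (intg_main u v 0 (2*π/3)) (intg_main u v (2*π/3) π)
    have hJle : (∫ s in (0:ℝ)..π, (1 + (u - v * Real.cos s)^2)⁻¹)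
        ≤ (k^2)⁻¹ * hh⁻¹ + 2*hh + (k^2)⁻¹ * hh⁻¹ + (π/3) * (v^2/4)⁻¹ := by
      rw [← e3, ← e2, ← e1]
      have hb1 := hp1.trans hp1'
      have hb2 : (∫ s in (s₀-hh)..(s₀+hh), (1 + (u - v * Real.cos s)^2)⁻¹) ≤ 2*hh := by
        calc (∫ s in (s₀-hh)..(s₀+hh), (1 + (u - v * Real.cos s)^2)⁻¹)
            ≤ (s₀ + hh - (s₀ - hh)) * 1 := hp2
          _ = 2*hh := by ring
      have hb3 := hp3.trans hp3'
      have hb4 := hp4.trans hp4'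
      linarith
    apply finishing (J_nonneg u v) hP0 (Q := 2*(v*s₀)) (by positivity)
    · rw [hBeq]
      have hvmu : v - u = v * (1 - Real.cos s₀) := by rw [hcos]; field_simp
      have hub : 1 - Real.cos s₀ ≤ s₀^2/2 := one_sub_cos_ub s₀
      have hs₀sq : π^2 ≤ v * s₀^2 := by
        have h1 : (π/w)^2 ≤ s₀^2 := pow_le_pow_left₀ hσ0.le h2i 2
        have h2 : v * (π/w)^2 = π^2 := by rw [← hw2]; field_simp
        have h3 : v*(π/w)^2 ≤ v*s₀^2 := mul_le_mul_of_nonneg_left h1 hv0.le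
        linarith only [h2, h3]
      have hB1 : v - u + 1 ≤ v * s₀^2 := by
        have h1 : v - u ≤ v * (s₀^2/2) := by
          rw [hvmu]
          exact mul_le_mul_of_nonneg_left hub hv0.le
        linarith only [h1, nine_le_pi_sq, hs₀sq]
      have hA1 : u + v + 1 ≤ 4*v := by linarith only [hu, huv, h2v]
      calc (u + v + 1) * (v - u + 1) ≤ (4*v) * (v * s₀^2) :=
            mul_le_mul hA1 hB1 (by linarith only [hu, huv]) (by positivity)
        _ = (2*(v*s₀))^2 := by ring
    · have ea : (k^2)⁻¹ * hh⁻¹ * (2*(v*s₀)) = 2*π^2 := by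
        rw [hkdef, hhdef]
        field_simp
      have eb : (2*hh) * (2*(v*s₀)) = 4*π^2 := by
        rw [hhdef]
        field_simp
        ring
      have ec : (π/3) * (v^2/4)⁻¹ * (2*(v*s₀)) ≤ 1 := by
        have h1 : (π/3) * (v^2/4)⁻¹ * (2*(v*s₀)) = 8*π*s₀/(3*v) := by
          field_simp
          ring
        rw [h1, div_le_one (by positivity)]
        have e1 : 8*π*s₀ ≤ 8*π*(π/2) := mul_le_mul_of_nonneg_left hs₀π2 (by positivity)
        linarith only [e1, pi_sq_le16, h2v]
      calc (∫ s in (0:ℝ)..π, (1 + (u - v * Real.cos s)^2)⁻¹) * (2*(v*s₀))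
          ≤ ((k^2)⁻¹ * hh⁻¹ + 2*hh + (k^2)⁻¹ * hh⁻¹ + (π/3) * (v^2/4)⁻¹) * (2*(v*s₀)) :=
            mul_le_mul_of_nonneg_right hJle (by positivity)
        _ = (k^2)⁻¹ * hh⁻¹ * (2*(v*s₀)) + (2*hh) * (2*(v*s₀)) + (k^2)⁻¹ * hh⁻¹ * (2*(v*s₀))
            + (π/3) * (v^2/4)⁻¹ * (2*(v*s₀)) := by ring
        _ ≤ 2*π^2 + 4*π^2 + 2*π^2 + 1 := by rw [ea, eb]; linarith only [ec]
        _ ≤ 900 := by linarith only [pi_sq_le16]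
  · -- Subcase 2-ii : s₀ < π/w
    have hd1 : s₀ + 2*(π/w) ≤ 2*π/3 := by linarith
    have hd10 : 0 ≤ s₀ + 2*(π/w) := by positivity
    have hp1 : (∫ s in (0:ℝ)..(s₀ + 2*(π/w)), (1 + (u - v * Real.cos s)^2)⁻¹)
        ≤ (s₀ + 2*(π/w) - 0) * 1 :=
      piece_le_const hd10 (intg_main u v _ _) (fun s _ => inv_main_le_one u v s)
    have hq2ptw : ∀ s ∈ Set.Icc (s₀ + 2*(π/w)) (2*π/3),
        (1 + (u - v * Real.cos s)^2)⁻¹ ≤ ((v/π^2)^2)⁻¹ * ((s - s₀)^4)⁻¹ := by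
      intro s hs
      have ht0 : 2*(π/w) ≤ s - s₀ := by linarith [hs.1]
      have ht0' : 0 < s - s₀ := lt_of_lt_of_le (by positivity) ht0
      have hq := hsq s (by linarith [hs.1]) hs.2
      have h5 : (v/π^2) * (s-s₀)^2 ≤ v * ((s+s₀) * |s-s₀| / π^2) := by
        rw [abs_of_nonneg ht0'.le]
        rw [div_mul_eq_mul_div, show v * ((s+s₀) * (s-s₀) / π^2) = v*((s+s₀)*(s-s₀))/π^2 from by ring]
        apply div_le_div_of_nonneg_right ?_ (by positivity)
        nlinarith [mul_nonneg (mul_nonneg hv0.le ht0'.le) hs₀0]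
      have h6 : ((v/π^2) * (s-s₀)^2)^2 ≤ (u - v*Real.cos s)^2 := by
        have := pow_le_pow_left₀ (by positivity) h5 2
        linarith
      have h7 : ((v/π^2) * (s-s₀)^2)^2 = (v/π^2)^2 * (s-s₀)^4 := by
        rw [mul_pow, ← pow_mul]
      have h9 : (v/π^2)^2 * (s-s₀)^4 ≤ 1 + (u - v*Real.cos s)^2 := by
        rw [← h7]; nlinarith
      have h8 : (0:ℝ) < (v/π^2)^2 * (s-s₀)^4 := by positivity
      have := inv_anti₀ h8 h9
      rwa [mul_inv] at this
    have hne2 : ∀ s ∈ Set.uIcc (s₀ + 2*(π/w)) (2*π/3), s ≠ s₀ := by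
      rw [Set.uIcc_of_le hd1]
      intro s hs
      have := hs.1
      exact ne_of_gt (by have := hσ0; linarith)
    have hmaj2 : IntervalIntegrable (fun s : ℝ => ((v/π^2)^2)⁻¹ * ((s - s₀)^4)⁻¹)
        volume (s₀ + 2*(π/w)) (2*π/3) := by
      apply IntervalIntegrable.const_mul
      apply ContinuousOn.intervalIntegrable
      apply ContinuousOn.inv₀
      · fun_prop
      · intro s hs
        have hne : s - s₀ ≠ 0 := sub_ne_zero.2 (hne2 s hs)
        positivity
    have hp2 : (∫ s in (s₀ + 2*(π/w))..(2*π/3), (1 + (u - v * Real.cos s)^2)⁻¹)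
        ≤ ((v/π^2)^2)⁻¹ * ((3*(2*(π/w))^3)⁻¹) := by
      calc (∫ s in (s₀ + 2*(π/w))..(2*π/3), (1 + (u - v * Real.cos s)^2)⁻¹)
          ≤ ∫ s in (s₀ + 2*(π/w))..(2*π/3), ((v/π^2)^2)⁻¹ * ((s - s₀)^4)⁻¹ :=
            intervalIntegral.integral_mono_on hd1 (intg_main u v _ _) hmaj2 hq2ptw
        _ = ((v/π^2)^2)⁻¹ * ((3*(s₀ + 2*(π/w) - s₀)^3)⁻¹ - (3*(2*π/3 - s₀)^3)⁻¹) := by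
            rw [intervalIntegral.integral_const_mul, integral_inv_pow4 hne2]
        _ ≤ ((v/π^2)^2)⁻¹ * ((3*(2*(π/w))^3)⁻¹) := by
            apply mul_le_mul_of_nonneg_left ?_ (by positivity)
            have e1 : s₀ + 2*(π/w) - s₀ = 2*(π/w) := by ring
            have h2 : (0:ℝ) < 2*π/3 - s₀ := by linarith
            have h3 : (0:ℝ) ≤ (3*(2*π/3 - s₀)^3)⁻¹ := by positivity
            rw [e1]
            linarith
    have e2 := intervalIntegral.integral_add_adjacent_intervals
      (intg_main u v 0 (s₀ + 2*(π/w))) (intg_main u v (s₀ + 2*(π/w)) (2*π/3))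
    have e3 := intervalIntegral.integral_add_adjacent_intervals
      (intg_main u v 0 (2*π/3)) (intg_main u v (2*π/3) π)
    have hJle : (∫ s in (0:ℝ)..π, (1 + (u - v * Real.cos s)^2)⁻¹)
        ≤ (s₀ + 2*(π/w)) + ((v/π^2)^2)⁻¹ * ((3*(2*(π/w))^3)⁻¹) + (π/3) * (v^2/4)⁻¹ := by
      rw [← e3, ← e2]
      have hb1 : (∫ s in (0:ℝ)..(s₀ + 2*(π/w)), (1 + (u - v * Real.cos s)^2)⁻¹)
          ≤ s₀ + 2*(π/w) := by
        calc (∫ s in (0:ℝ)..(s₀ + 2*(π/w)), (1 + (u - v * Real.cos s)^2)⁻¹)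
            ≤ (s₀ + 2*(π/w) - 0) * 1 := hp1
          _ = s₀ + 2*(π/w) := by ring
      have hb4 := hp4.trans hp4'
      linarith
    apply finishing (J_nonneg u v) hP0 (Q := 5*w) (by positivity)
    · rw [hBeq]
      have hvmu : v - u = v * (1 - Real.cos s₀) := by rw [hcos]; field_simp
      have hub : 1 - Real.cos s₀ ≤ s₀^2/2 := one_sub_cos_ub s₀
      have hs₀σ : s₀^2 ≤ (π/w)^2 := pow_le_pow_left₀ hs₀0 h2ii.le 2
      have h2 : v * (π/w)^2 = π^2 := by rw [← hw2]; field_simp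
      have hB1 : v - u + 1 ≤ 9 := by
        have h1 : v - u ≤ v * (s₀^2/2) := by
          rw [hvmu]
          exact mul_le_mul_of_nonneg_left hub hv0.le
        have h3 : v * s₀^2 ≤ π^2 := by
          have h4 := mul_le_mul_of_nonneg_left hs₀σ hv0.le
          linarith only [h4, h2]
        linarith only [h1, h3, pi_sq_le16]
      have hA1 : u + v + 1 ≤ 2*v + 1 := by linarith only [huv]
      have hq : (u + v + 1) * (v - u + 1) ≤ (2*v+1) * 9 :=
        mul_le_mul hA1 hB1 (by linarith only [hu, huv]) (by positivity)
      have hww : (36:ℝ) < w^2 := by rw [hw2]; exact h2v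
      linarith only [hq, hww, hw2]
    · have ea : (s₀ + 2*(π/w)) * (5*w) ≤ 15*π := by
        have h1 : s₀ + 2*(π/w) ≤ 3*(π/w) := by linarith
        have h2 : 3*(π/w) * (5*w) = 15*π := by field_simp; ring
        calc (s₀ + 2*(π/w)) * (5*w) ≤ 3*(π/w) * (5*w) :=
              mul_le_mul_of_nonneg_right h1 (by positivity)
          _ = 15*π := h2
      have eb : ((v/π^2)^2)⁻¹ * ((3*(2*(π/w))^3)⁻¹) * (5*w) = 5*π/24 := by
        rw [← hw2]
        field_simp
        ring
      have ec : (π/3) * (v^2/4)⁻¹ * (5*w) ≤ 1 := by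
        have h1 : (π/3) * (v^2/4)⁻¹ * (5*w) = 20*π*w/(3*v^2) := by
          field_simp
          ring
        rw [h1, div_le_one (by positivity)]
        have hw4 : v^2 = w^4 := by rw [← hw2]; ring
        have h3 : (6:ℝ)^3 < w^3 := by
          apply pow_lt_pow_left₀ hw6 (by norm_num)
          norm_num
        have h4 : 216*w ≤ w^3*w := by
          calc (216:ℝ)*w = 6^3*w := by norm_num
            _ ≤ w^3*w := mul_le_mul_of_nonneg_right h3.le hw0.le
        have h5 : 20*π*w ≤ 80*w :=
          mul_le_mul_of_nonneg_right (by linarith only [hpi4] : 20*π ≤ 80) hw0.le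
        linarith only [h4, h5, hw4, hw0.le]
      calc (∫ s in (0:ℝ)..π, (1 + (u - v * Real.cos s)^2)⁻¹) * (5*w)
          ≤ ((s₀ + 2*(π/w)) + ((v/π^2)^2)⁻¹ * ((3*(2*(π/w))^3)⁻¹) + (π/3) * (v^2/4)⁻¹) * (5*w) :=
            mul_le_mul_of_nonneg_right hJle (by positivity)
        _ = (s₀ + 2*(π/w)) * (5*w) + ((v/π^2)^2)⁻¹ * ((3*(2*(π/w))^3)⁻¹) * (5*w)
            + (π/3) * (v^2/4)⁻¹ * (5*w) := by ring
        _ ≤ 15*π + 5*π/24 + 1 := by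
            rw [eb]
            linarith only [ea, ec]
        _ ≤ 900 := by linarith only [hpi4]

lemma key (u v : ℝ) (hu : 0 ≤ u) (hv : 0 ≤ v) :
    ∫ s in (0:ℝ)..π, (1 + (u - v * Real.cos s)^2)⁻¹
      ≤ 900 / Real.sqrt ((u + v + 1) * (|u - v| + 1)) := by
  have hpi := Real.pi_pos
  have hpi4 := Real.pi_le_four
  have hpi3 := Real.pi_gt_three
  have hBle : |u - v| ≤ u + v := abs_le.2 ⟨by linarith, by linarith⟩
  have hB0 : 0 ≤ |u - v| := abs_nonneg _
  have hP0 : 0 < (u + v + 1) * (|u - v| + 1) := by positivity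
  rcases le_or_gt (u + v) 1 with hA | hA
  · exact key_triv u v 2 (by norm_num) (by linarith) hP0 (by nlinarith)
  rcases le_or_gt v u with hvu | huv
  · -- Branch 1 : v ≤ u
    have hBeq : |u - v| = u - v := abs_of_nonneg (by linarith)
    have hb0 : 0 ≤ u - v := by linarith
    -- pointwise floor bound
    have hflo : ∀ s ∈ Set.Icc (0:ℝ) π, (1 + (u - v * Real.cos s)^2)⁻¹ ≤ (1 + (u-v)^2)⁻¹ := by
      intro s _
      apply inv_anti₀ (by positivity)
      have hc : Real.cos s ≤ 1 := Real.cos_le_one s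
      nlinarith [mul_le_mul_of_nonneg_left hc hv]
    rcases le_or_gt v (1 + (u - v)) with h1t | h1m
    · -- easy subcase
      have hJb : (∫ s in (0:ℝ)..π, (1 + (u - v * Real.cos s)^2)⁻¹) ≤ π * (1 + (u-v)^2)⁻¹ := by
        have h := piece_le_const (c := 0) (d := π) hpi.le (intg_main u v 0 π) hflo
        simpa using h
      apply finishing (J_nonneg u v) hP0 (Q := 2*(1+(u-v))) (by positivity)
      · rw [hBeq]; nlinarith
      · have h2 : (0:ℝ) < 1 + (u-v)^2 := by positivity
        calc (∫ s in (0:ℝ)..π, (1 + (u - v * Real.cos s)^2)⁻¹) * (2*(1+(u-v)))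
            ≤ (π * (1 + (u-v)^2)⁻¹) * (2*(1+(u-v))) := by
              apply mul_le_mul_of_nonneg_right hJb (by positivity)
          _ ≤ 900 := by
              have h3 : (1+(u-v))/(1+(u-v)^2) ≤ 2 := by
                rw [div_le_iff₀ h2]; nlinarith
              calc π * (1 + (u-v)^2)⁻¹ * (2*(1+(u-v)))
                  = (1+(u-v))/(1+(u-v)^2) * (2*π) := by ring
                _ ≤ 2 * (2*π) := mul_le_mul_of_nonneg_right h3 (by positivity)
                _ ≤ 900 := by nlinarith
    · -- main subcase of branch 1
      have h1b0 : (0:ℝ) < 1 + (u - v) := by linarith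
      have hv1 : (1:ℝ) < v := by linarith
      have hv0 : (0:ℝ) < v := by linarith
      set r := Real.sqrt (1 + (u - v)) with hrdef
      set w := Real.sqrt v with hwdef
      have hr2 : r^2 = 1 + (u - v) := Real.sq_sqrt h1b0.le
      have hw2 : w^2 = v := Real.sq_sqrt hv0.le
      have hr0 : 0 < r := Real.sqrt_pos.2 h1b0
      have hw0 : 0 < w := Real.sqrt_pos.2 hv0
      have hr1 : 1 ≤ r := by nlinarith
      have hrw : r < w := Real.sqrt_lt_sqrt h1b0.le h1m
      have hspos : 0 < π * r / w := by positivity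
      have hsltpi : π * r / w < π := by
        rw [div_lt_iff₀ hw0]
        nlinarith
      set K2 := 4 * w^2 * r^2 / π^2 with hK2def
      have hK20 : 0 < K2 := by positivity
      -- pointwise bound on the tail
      have hptw : ∀ s ∈ Set.Icc (π*r/w) π,
          (1 + (u - v * Real.cos s)^2)⁻¹ ≤ K2⁻¹ * ((s - 0)^2)⁻¹ := by
        intro s hs
        have hs0 : 0 < s := lt_of_lt_of_le hspos hs.1
        have hws : π * r ≤ w * s := by
          have h1 := hs.1
          rw [div_le_iff₀ hw0] at h1
          linarith
        have hcos := one_sub_cos_lb hs0.le hs.2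
        have hcv : v * (2 * s^2 / π^2) ≤ v * (1 - Real.cos s) :=
          mul_le_mul_of_nonneg_left hcos hv
        have hfX : (u - v) + v * (2 * s^2 / π^2) ≤ u - v * Real.cos s := by linarith
        have hX0 : 0 ≤ (u - v) + v * (2 * s^2 / π^2) := by positivity
        have hsq : ((u - v) + v * (2 * s^2 / π^2))^2 ≤ (u - v * Real.cos s)^2 :=
          pow_le_pow_left₀ hX0 hfX 2
        have hws2 : (π*r)^2 ≤ (w*s)^2 := pow_le_pow_left₀ (by positivity) hws 2
        have hXge : 2 * r^2 ≤ v * (2 * s^2 / π^2) := by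
          have hvs : π^2 * r^2 ≤ v * s^2 := by
            rw [mul_pow, mul_pow, hw2] at hws2
            exact hws2
          have h2 : v * (2 * s^2 / π^2) = 2*(v*s^2)/π^2 := by ring
          rw [h2, le_div_iff₀ (by positivity : (0:ℝ) < π^2)]
          linarith
        have hK2s : K2 * (s - 0)^2 ≤ ((u - v) + v * (2 * s^2 / π^2))^2 := by
          rw [hK2def, hw2]
          have h1 : 0 ≤ v * (2 * s^2 / π^2) := by positivity
          have h2 : 4 * v * r^2 / π^2 * (s-0)^2 = (2*r^2) * (v * (2 * s^2/π^2)) := by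
            field_simp
            ring
          rw [h2]
          have h3 := mul_le_mul_of_nonneg_right hXge h1
          nlinarith [hb0, h1, h3]
        have hfin : K2 * (s - 0)^2 ≤ 1 + (u - v * Real.cos s)^2 := by nlinarith
        have := inv_anti₀ (mul_pos hK20 (pow_pos (by linarith : (0:ℝ) < s - 0) 2)) hfin
        rwa [mul_inv] at this
      have hne : ∀ s ∈ Set.uIcc (π*r/w) π, s ≠ (0:ℝ) := by
        rw [Set.uIcc_of_le hsltpi.le]
        intro s hs
        exact (lt_of_lt_of_le hspos hs.1).ne'
      have hmaj : IntervalIntegrable (fun s : ℝ => K2⁻¹ * ((s - 0)^2)⁻¹) volume (π*r/w) π :=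
        ((contOn_inv_sq hne).intervalIntegrable).const_mul _
      have hp2 : (∫ s in (π*r/w)..π, (1 + (u - v * Real.cos s)^2)⁻¹)
          ≤ K2⁻¹ * ((π*r/w - 0)⁻¹ - (π - 0)⁻¹) := by
        calc (∫ s in (π*r/w)..π, (1 + (u - v * Real.cos s)^2)⁻¹)
            ≤ ∫ s in (π*r/w)..π, K2⁻¹ * ((s - 0)^2)⁻¹ :=
              intervalIntegral.integral_mono_on hsltpi.le (intg_main u v _ _) hmaj hptw
          _ = K2⁻¹ * ((π*r/w - 0)⁻¹ - (π - 0)⁻¹) := by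
              rw [intervalIntegral.integral_const_mul, integral_inv_sq hne]
      have hp1 : (∫ s in (0:ℝ)..(π*r/w), (1 + (u - v * Real.cos s)^2)⁻¹)
          ≤ (π*r/w) * (1 + (u-v)^2)⁻¹ := by
        have h := piece_le_const (c := 0) (d := π*r/w) hspos.le (intg_main u v 0 _)
          (fun s hs => hflo s ⟨hs.1, hs.2.trans hsltpi.le⟩)
        simpa using h
      have hsplit := intervalIntegral.integral_add_adjacent_intervals
        (intg_main u v 0 (π*r/w)) (intg_main u v (π*r/w) π)
      apply finishing (J_nonneg u v) hP0 (Q := 2*w*r) (by positivity)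
      · rw [hBeq]
        nlinarith
      · have hJle : (∫ s in (0:ℝ)..π, (1 + (u - v * Real.cos s)^2)⁻¹)
            ≤ (π*r/w) * (1 + (u-v)^2)⁻¹ + K2⁻¹ * ((π*r/w - 0)⁻¹ - (π - 0)⁻¹) := by
          rw [← hsplit]
          exact add_le_add hp1 hp2
        have hb2 : (1+(u-v)^2)⁻¹ ≤ (r^4/2)⁻¹ := by
          apply inv_anti₀ (by positivity)
          nlinarith [sq_nonneg (r^2 - 2)]
        have e1 : (π*r/w) * (1 + (u-v)^2)⁻¹ * (2*w*r) ≤ 4*π := by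
          calc (π*r/w) * (1 + (u-v)^2)⁻¹ * (2*w*r)
              ≤ (π*r/w) * (r^4/2)⁻¹ * (2*w*r) := by
                apply mul_le_mul_of_nonneg_right
                  (mul_le_mul_of_nonneg_left hb2 (by positivity)) (by positivity)
            _ = 4*π/r^2 := by field_simp; ring
            _ ≤ 4*π := by
                rw [div_le_iff₀ (by positivity : (0:ℝ) < r^2)]
                nlinarith
        have e2 : K2⁻¹ * ((π*r/w - 0)⁻¹ - (π - 0)⁻¹) * (2*w*r) ≤ π/2 := by
          have h1 : (π*r/w - 0)⁻¹ - (π - 0)⁻¹ ≤ (π*r/w)⁻¹ := by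
            simp only [sub_zero]
            have : 0 ≤ π⁻¹ := by positivity
            linarith
          calc K2⁻¹ * ((π*r/w - 0)⁻¹ - (π - 0)⁻¹) * (2*w*r)
              ≤ K2⁻¹ * (π*r/w)⁻¹ * (2*w*r) := by
                apply mul_le_mul_of_nonneg_right
                  (mul_le_mul_of_nonneg_left h1 (by positivity)) (by positivity)
            _ = π/(2*r^2) := by rw [hK2def]; field_simp; ring
            _ ≤ π/2 := by
                apply div_le_div_of_nonneg_left hpi.le (by norm_num)
                nlinarith
        have hJ0 := J_nonneg u v
        calc (∫ s in (0:ℝ)..π, (1 + (u - v * Real.cos s)^2)⁻¹) * (2*w*r)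
            ≤ ((π*r/w) * (1 + (u-v)^2)⁻¹ + K2⁻¹ * ((π*r/w - 0)⁻¹ - (π - 0)⁻¹)) * (2*w*r) :=
              mul_le_mul_of_nonneg_right hJle (by positivity)
          _ = (π*r/w) * (1 + (u-v)^2)⁻¹ * (2*w*r)
              + K2⁻¹ * ((π*r/w - 0)⁻¹ - (π - 0)⁻¹) * (2*w*r) := by ring
          _ ≤ 4*π + π/2 := add_le_add e1 e2
          _ ≤ 900 := by nlinarith
  · -- Branch 2 : u < v
    have hv0 : 0 < v := lt_of_le_of_lt hu huv
    have hBeq : |u - v| = v - u := by rw [abs_sub_comm]; exact abs_of_nonneg (by linarith)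
    rcases le_or_gt v 36 with h2t | h2v
    · apply key_triv u v 52 (by norm_num) (by linarith) hP0
      rw [hBeq]; nlinarith
    · exact key_branch2 u v hu huv h2v

lemma refl_int (u v : ℝ) :
    (∫ s in (0:ℝ)..π, (1 + (u + v * Real.cos s)^2)⁻¹)
      = ∫ s in (0:ℝ)..π, (1 + (u - v * Real.cos s)^2)⁻¹ := by
  have h1 : (∫ s in (0:ℝ)..π, (1 + (u - v*Real.cos (π - s))^2)⁻¹)
      = ∫ s in (π - π)..(π - 0), (1 + (u - v*Real.cos s)^2)⁻¹ :=
    intervalIntegral.integral_comp_sub_left (fun s => (1 + (u - v * Real.cos s)^2)⁻¹) π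
  have h0 : (fun s : ℝ => (1 + (u + v * Real.cos s)^2)⁻¹)
      = (fun s : ℝ => (1 + (u - v * Real.cos (π - s))^2)⁻¹) := by
    funext s
    rw [Real.cos_pi_sub]
    ring_nf
  rw [h0]
  rw [h1]
  norm_num

lemma key2 (u v : ℝ) :
    (∫ s in (0:ℝ)..π, (1 + (u - v * Real.cos s)^2)⁻¹)
      ≤ 900 / Real.sqrt ((|u + v| + 1) * (|u - v| + 1)) := by
  rcases le_or_gt 0 u with hu | hu <;> rcases le_or_gt 0 v with hv | hv
  · rw [abs_of_nonneg (by linarith : 0 ≤ u + v)]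
    exact key u v hu hv
  · -- u ≥ 0, v < 0
    have e : (fun s : ℝ => (1 + (u - v * Real.cos s)^2)⁻¹)
        = (fun s : ℝ => (1 + (u + (-v) * Real.cos s)^2)⁻¹) := by
      funext s; ring_nf
    rw [e, refl_int u (-v)]
    have h := key u (-v) hu (by linarith)
    rw [abs_of_nonneg (by linarith : (0:ℝ) ≤ u - v)]
    calc (∫ s in (0:ℝ)..π, (1 + (u - -v * Real.cos s)^2)⁻¹)
        ≤ 900 / Real.sqrt ((u + -v + 1) * (|u - -v| + 1)) := h
      _ = 900 / Real.sqrt ((|u + v| + 1) * (u - v + 1)) := by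
          rw [show u + -v + 1 = u - v + 1 by ring, show u - -v = u + v by ring, mul_comm]
  · -- u < 0, v ≥ 0
    have e : (fun s : ℝ => (1 + (u - v * Real.cos s)^2)⁻¹)
        = (fun s : ℝ => (1 + ((-u) + v * Real.cos s)^2)⁻¹) := by
      funext s; ring_nf
    rw [e, refl_int (-u) v]
    have h := key (-u) v (by linarith) hv
    rw [abs_of_nonpos (by linarith : u - v ≤ 0)]
    calc (∫ s in (0:ℝ)..π, (1 + (-u - v * Real.cos s)^2)⁻¹)
        ≤ 900 / Real.sqrt ((-u + v + 1) * (|-u - v| + 1)) := h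
      _ = 900 / Real.sqrt ((|u + v| + 1) * (-(u - v) + 1)) := by
          rw [show -u - v = -(u + v) by ring, abs_neg,
            show -u + v + 1 = -(u - v) + 1 by ring, mul_comm]
  · -- u < 0, v < 0
    have e : (fun s : ℝ => (1 + (u - v * Real.cos s)^2)⁻¹)
        = (fun s : ℝ => (1 + ((-u) - (-v) * Real.cos s)^2)⁻¹) := by
      funext s; ring_nf
    rw [e]
    have h := key (-u) (-v) (by linarith) (by linarith)
    calc (∫ s in (0:ℝ)..π, (1 + (-u - -v * Real.cos s)^2)⁻¹)
        ≤ 900 / Real.sqrt ((-u + -v + 1) * (|-u - -v| + 1)) := h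
      _ = 900 / Real.sqrt ((|u + v| + 1) * (|u - v| + 1)) := by
          rw [show -u + -v + 1 = -(u+v) + 1 by ring, show -u - -v = -(u - v) by ring,
            abs_neg, abs_of_nonpos (by linarith : u + v ≤ 0)]

end ExpIntAux

open ExpIntAux in
/-- There is a universal constant C > 0 such that for all u, v ∈ ℝ,
(1/π)·∫₀^π exp(−(u − v·cos s)²) ds ≤ C / √((|u+v|+1)(|u−v|+1)). -/
theorem exists_const_integral_exp_le :
    ∃ C : ℝ, 0 < C ∧ ∀ u v : ℝ,
      (1 / π) * ∫ s in (0:ℝ)..π, Real.exp (-(u - v * Real.cos s) ^ 2)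
        ≤ C / Real.sqrt ((|u + v| + 1) * (|u - v| + 1)) := by
  refine ⟨900, by norm_num, fun u v => ?_⟩
  have hpi := Real.pi_pos
  have hexp_cont : Continuous fun s : ℝ => Real.exp (-(u - v * Real.cos s)^2) := by
    apply Real.continuous_exp.comp
    continuity
  have hIexp : (∫ s in (0:ℝ)..π, Real.exp (-(u - v * Real.cos s)^2))
      ≤ ∫ s in (0:ℝ)..π, (1 + (u - v * Real.cos s)^2)⁻¹ :=
    intervalIntegral.integral_mono_on hpi.le (hexp_cont.intervalIntegrable 0 π)
      (intg_main u v 0 π) (fun s _ => exp_le (u - v * Real.cos s))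
  have hJ0 := J_nonneg u v
  have hIe0 : 0 ≤ ∫ s in (0:ℝ)..π, Real.exp (-(u - v * Real.cos s)^2) :=
    intervalIntegral.integral_nonneg hpi.le (fun s _ => (Real.exp_pos _).le)
  have h1 : (1/π) * (∫ s in (0:ℝ)..π, Real.exp (-(u - v * Real.cos s)^2))
      ≤ ∫ s in (0:ℝ)..π, Real.exp (-(u - v * Real.cos s)^2) := by
    apply mul_le_of_le_one_left hIe0
    rw [div_le_one hpi]
    linarith [Real.pi_gt_three]
  calc (1/π) * (∫ s in (0:ℝ)..π, Real.exp (-(u - v * Real.cos s)^2))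
      ≤ ∫ s in (0:ℝ)..π, Real.exp (-(u - v * Real.cos s)^2) := h1
    _ ≤ ∫ s in (0:ℝ)..π, (1 + (u - v * Real.cos s)^2)⁻¹ := hIexp
    _ ≤ 900 / Real.sqrt ((|u + v| + 1) * (|u - v| + 1)) := key2 u v
end

section
/- For all real numbers u, v ≥ 0 with v ≥ 1 and u ≥ v, the integral (1/π)·∫₀^π exp(−(u − v·cos s)²) ds is at most exp(−(u − v)²)/sqrt(2v). -/
open Real MeasureTheory

lemma exp_neg_le_quad {y : ℝ} (hy : 0 ≤ y) : Real.exp (-y) ≤ 1 - y + y ^ 2 / 2 := by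
  have h := Real.quadratic_le_exp_of_nonneg hy
  have hpos : (0:ℝ) < Real.exp y := Real.exp_pos y
  rw [Real.exp_neg, inv_le_iff_one_le_mul₀ hpos]
  nlinarith [sq_nonneg (y ^ 2), sq_nonneg y]

lemma cont_exp_pow4 : Continuous fun t : ℝ => Real.exp (-t ^ 4) := by
  fun_prop

lemma integral_exp_pow4_le {A : ℝ} (hA : 1 ≤ A) :
    ∫ t in (0:ℝ)..A, Real.exp (-t ^ 4) ≤ 1 := by
  have hint : ∀ a b : ℝ, IntervalIntegrable (fun t => Real.exp (-t ^ 4)) volume a b :=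
    fun a b => cont_exp_pow4.intervalIntegrable a b
  have hsplit : ∫ t in (0:ℝ)..A, Real.exp (-t ^ 4)
      = (∫ t in (0:ℝ)..1, Real.exp (-t ^ 4)) + ∫ t in (1:ℝ)..A, Real.exp (-t ^ 4) :=
    (intervalIntegral.integral_add_adjacent_intervals (hint 0 1) (hint 1 A)).symm
  rw [hsplit]
  have h1 : ∫ t in (0:ℝ)..1, Real.exp (-t ^ 4) ≤ 77 / 90 := by
    have hmono : ∫ t in (0:ℝ)..1, Real.exp (-t ^ 4)
        ≤ ∫ t in (0:ℝ)..1, (1 - t ^ 4 + (t ^ 4) ^ 2 / 2) := by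
      apply intervalIntegral.integral_mono_on (by norm_num) (hint 0 1)
      · apply Continuous.intervalIntegrable; fun_prop
      · intro t ht
        exact exp_neg_le_quad (by positivity)
    refine hmono.trans_eq ?_
    have : ∀ t : ℝ, 1 - t ^ 4 + (t ^ 4) ^ 2 / 2 = 1 - t ^ 4 + t ^ 8 / 2 := by
      intro t; ring
    simp_rw [this]
    have i1 : IntervalIntegrable (fun t : ℝ => (1:ℝ)) volume 0 1 := intervalIntegrable_const
    have i2 : IntervalIntegrable (fun t : ℝ => t ^ 4) volume 0 1 := by
      apply Continuous.intervalIntegrable; fun_prop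
    have i3 : IntervalIntegrable (fun t : ℝ => t ^ 8 / 2) volume 0 1 := by
      apply Continuous.intervalIntegrable; fun_prop
    rw [intervalIntegral.integral_add (i1.sub i2) i3, intervalIntegral.integral_sub i1 i2]
    simp only [intervalIntegral.integral_div, integral_pow,
      integral_one]
    norm_num
  have h2 : ∫ t in (1:ℝ)..A, Real.exp (-t ^ 4) ≤ 1 / 8 := by
    have hmono : ∫ t in (1:ℝ)..A, Real.exp (-t ^ 4)
        ≤ ∫ t in (1:ℝ)..A, Real.exp (3 - 4 * t) := by
      apply intervalIntegral.integral_mono_on hA (hint 1 A)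
      · apply Continuous.intervalIntegrable; fun_prop
      · intro t ht
        apply Real.exp_le_exp.2
        have h1t : 1 ≤ t := ht.1
        nlinarith [sq_nonneg (t - 1), sq_nonneg (t + 1), sq_nonneg t]
    refine hmono.trans ?_
    have hderiv : ∀ t ∈ Set.uIcc (1:ℝ) A,
        HasDerivAt (fun t => -Real.exp (3 - 4 * t) / 4) (Real.exp (3 - 4 * t)) t := by
      intro t _
      have h1 : HasDerivAt (fun t : ℝ => 3 - 4 * t) (-4) t := by
        simpa using ((hasDerivAt_id t).const_mul (4:ℝ)).const_sub 3
      have h2 := (h1.exp).neg.div_const 4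
      exact h2.congr_deriv (by ring)
    rw [intervalIntegral.integral_eq_sub_of_hasDerivAt hderiv
      (by apply Continuous.intervalIntegrable; fun_prop)]
    have hA4 : (0:ℝ) < Real.exp (3 - 4 * A) := Real.exp_pos _
    have he : Real.exp (3 - 4 * 1) = Real.exp (-1) := by norm_num
    have hle : Real.exp (-1 : ℝ) ≤ 1 / 2 := by
      rw [Real.exp_neg, inv_le_iff_one_le_mul₀ (Real.exp_pos 1)]
      have := Real.add_one_le_exp (1:ℝ)
      linarith
    rw [he]
    linarith
  linarith

/-- For all real u, v with v ≥ 1 and u ≥ v (hence u, v ≥ 0),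
(1/π)·∫₀^π exp(−(u − v·cos s)²) ds ≤ exp(−(u−v)²)/√(2v). -/
theorem integral_exp_le_of_le (u v : ℝ) (hv0 : 0 ≤ v) (hu0 : 0 ≤ u) (hv : 1 ≤ v)
    (huv : v ≤ u) :
    (1 / π) * ∫ s in (0:ℝ)..π, Real.exp (-(u - v * Real.cos s) ^ 2)
      ≤ Real.exp (-(u - v) ^ 2) / Real.sqrt (2 * v) := by
  have hpi : (0:ℝ) < π := Real.pi_pos
  set R := Real.sqrt (2 * v) with hR
  have h2v : (0:ℝ) < 2 * v := by linarith
  have hRsq : R ^ 2 = 2 * v := Real.sq_sqrt h2v.le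
  have hR1 : 1 ≤ R := by
    rw [hR]
    have : (1:ℝ) = Real.sqrt 1 := (Real.sqrt_one).symm
    rw [this]
    exact Real.sqrt_le_sqrt (by linarith)
  have hR0 : 0 < R := lt_of_lt_of_le one_pos hR1
  set c := R / π with hc
  have hc0 : 0 < c := div_pos hR0 hpi
  -- pointwise bound
  have hpt : ∀ s ∈ Set.Icc (0:ℝ) π,
      Real.exp (-(u - v * Real.cos s) ^ 2)
        ≤ Real.exp (-(u - v) ^ 2) * Real.exp (-(c * s) ^ 4) := by
    intro s hs
    rw [← Real.exp_add]
    apply Real.exp_le_exp.2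
    -- need : -(u - v*cos s)^2 ≤ -(u-v)^2 + -(c*s)^4
    have hsin : s / π ≤ Real.sin (s / 2) := by
      have h := Real.mul_le_sin (x := s / 2) (by linarith [hs.1]) (by
        have := hs.2; linarith)
      calc s / π = 2 / π * (s / 2) := by field_simp
        _ ≤ Real.sin (s / 2) := h
    have hsin0 : 0 ≤ s / π := div_nonneg hs.1 hpi.le
    have hsinsq : (s / π) ^ 2 ≤ Real.sin (s / 2) ^ 2 := by
      apply pow_le_pow_left₀ hsin0 hsin
    have hcos : 1 - Real.cos s = 2 * Real.sin (s / 2) ^ 2 := by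
      have := Real.sin_sq_eq_half_sub (s / 2)
      rw [show 2 * (s / 2) = s by ring] at this
      linarith
    -- b := v * (1 - cos s) ≥ 2 v s² / π²
    have hb : 2 * v * (s / π) ^ 2 ≤ v * (1 - Real.cos s) := by
      rw [hcos]
      nlinarith
    have hb0 : 0 ≤ v * (1 - Real.cos s) := by
      have := Real.cos_le_one s
      nlinarith
    have ha0 : 0 ≤ u - v := by linarith
    have hcs : (c * s) ^ 4 = (2 * v * (s / π) ^ 2) ^ 2 := by
      have hpne : (π:ℝ) ≠ 0 := hpi.ne'
      have : (c * s) ^ 4 = (R ^ 2) ^ 2 * s ^ 4 / π ^ 4 := by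
        rw [hc]; field_simp
      rw [this, hRsq]
      field_simp
    have key : (u - v) ^ 2 + (c * s) ^ 4 ≤ (u - v * Real.cos s) ^ 2 := by
      have heq : u - v * Real.cos s = (u - v) + v * (1 - Real.cos s) := by ring
      rw [heq, hcs]
      have hB0 : 0 ≤ 2 * v * (s / π) ^ 2 := by positivity
      nlinarith [mul_nonneg ha0 hb0,
        mul_nonneg (sub_nonneg.2 hb) (add_nonneg hb0 hB0)]
    linarith
  -- integral bound
  have hInt1 : IntervalIntegrable (fun s => Real.exp (-(u - v * Real.cos s) ^ 2))
      volume 0 π := by apply Continuous.intervalIntegrable; fun_prop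
  have hInt2 : IntervalIntegrable
      (fun s => Real.exp (-(u - v) ^ 2) * Real.exp (-(c * s) ^ 4)) volume 0 π := by
    apply Continuous.intervalIntegrable; fun_prop
  have hmono : ∫ s in (0:ℝ)..π, Real.exp (-(u - v * Real.cos s) ^ 2)
      ≤ ∫ s in (0:ℝ)..π, Real.exp (-(u - v) ^ 2) * Real.exp (-(c * s) ^ 4) :=
    intervalIntegral.integral_mono_on hpi.le hInt1 hInt2 hpt
  have hcomp : ∫ s in (0:ℝ)..π, Real.exp (-(c * s) ^ 4)
      = c⁻¹ * ∫ t in (0:ℝ)..(c * π), Real.exp (-t ^ 4) := by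
    have := intervalIntegral.integral_comp_mul_left
      (a := (0:ℝ)) (b := π) (fun t => Real.exp (-t ^ 4)) hc0.ne'
    rw [this]
    simp [smul_eq_mul]
  have hcpi : c * π = R := by rw [hc]; field_simp
  have hle1 : ∫ t in (0:ℝ)..(c * π), Real.exp (-t ^ 4) ≤ 1 := by
    rw [hcpi]; exact integral_exp_pow4_le hR1
  have hbound : ∫ s in (0:ℝ)..π, Real.exp (-(c * s) ^ 4) ≤ c⁻¹ := by
    rw [hcomp]
    calc c⁻¹ * ∫ t in (0:ℝ)..(c * π), Real.exp (-t ^ 4)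
        ≤ c⁻¹ * 1 := by
          apply mul_le_mul_of_nonneg_left hle1 (by positivity)
      _ = c⁻¹ := mul_one _
  have hconst : ∫ s in (0:ℝ)..π, Real.exp (-(u - v) ^ 2) * Real.exp (-(c * s) ^ 4)
      = Real.exp (-(u - v) ^ 2) * ∫ s in (0:ℝ)..π, Real.exp (-(c * s) ^ 4) := by
    rw [← intervalIntegral.integral_const_mul]
  have hfinal : ∫ s in (0:ℝ)..π, Real.exp (-(u - v * Real.cos s) ^ 2)
      ≤ Real.exp (-(u - v) ^ 2) * c⁻¹ := by
    refine hmono.trans ?_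
    rw [hconst]
    exact mul_le_mul_of_nonneg_left hbound (Real.exp_pos _).le
  have hcinv : c⁻¹ = π / R := by rw [hc]; field_simp
  calc (1 / π) * ∫ s in (0:ℝ)..π, Real.exp (-(u - v * Real.cos s) ^ 2)
      ≤ (1 / π) * (Real.exp (-(u - v) ^ 2) * c⁻¹) := by
        apply mul_le_mul_of_nonneg_left hfinal (by positivity)
    _ = Real.exp (-(u - v) ^ 2) / R := by
        rw [hcinv]; field_simp
end

section
/- Let a, d ≥ 0 and c ∈ ℝ, and suppose not both a = 0 and d = 0. Then there exist λ, μ ≥ 0 and φ ∈ [−π/4, π/4] with λμ = ad + c², λ − μ = a − d, and tan(2φ) = 2c/(a + d), such that the 2×2 real matrix with rows (a, −c) and (c, d) equals r_φ · diag(λ, μ) · r_φ, where r_φ is the rotation matrix with rows (cos φ, −sin φ) and (sin φ, cos φ). -/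
open Real Matrix
set_option maxHeartbeats 1000000

/-- For a, d ≥ 0 and c ∈ ℝ, not both a and d zero, the matrix (a, −c; c, d)
can be written as r_φ · diag(λ, μ) · r_φ with λ, μ ≥ 0, φ ∈ [−π/4, π/4],
λμ = ad + c², λ − μ = a − d and tan(2φ) = 2c/(a+d). -/
theorem polar_decomposition_in_SL2_general (a d c : ℝ) (ha : 0 ≤ a) (hd : 0 ≤ d)
    (h : ¬(a = 0 ∧ d = 0)) :
    ∃ lam mu φ : ℝ, 0 ≤ lam ∧ 0 ≤ mu ∧ φ ∈ Set.Icc (-(π / 4)) (π / 4) ∧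
      lam * mu = a * d + c ^ 2 ∧ lam - mu = a - d ∧
      Real.tan (2 * φ) = 2 * c / (a + d) ∧
      !![a, -c; c, d] =
        !![Real.cos φ, -Real.sin φ; Real.sin φ, Real.cos φ] *
          Matrix.diagonal ![lam, mu] *
          !![Real.cos φ, -Real.sin φ; Real.sin φ, Real.cos φ] := by
  have ht : 0 < a + d := by
    rcases lt_or_eq_of_le ha with h1 | h1
    · linarith
    rcases lt_or_eq_of_le hd with h2 | h2
    · linarith
    exact absurd ⟨h1.symm, h2.symm⟩ h
  set t := a + d with htdef
  set S := Real.sqrt (t ^ 2 + 4 * c ^ 2) with hSdef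
  have hS2 : S ^ 2 = t ^ 2 + 4 * c ^ 2 := Real.sq_sqrt (by positivity)
  have hS : 0 < S := Real.sqrt_pos.mpr (by positivity)
  have habs : a - d ≤ S ∧ -(S) ≤ a - d := by
    constructor <;> nlinarith [sq_nonneg (a - d), mul_nonneg ha hd]
  refine ⟨(S + (a - d)) / 2, (S - (a - d)) / 2, Real.arctan (2 * c / t) / 2,
    by linarith [habs.2], by linarith [habs.1], ?_, by nlinarith, by ring, ?_, ?_⟩
  · constructor
    · have := Real.neg_pi_div_two_lt_arctan (2 * c / t)
      linarith
    · have := Real.arctan_lt_pi_div_two (2 * c / t)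
      linarith
  · rw [show 2 * (Real.arctan (2 * c / t) / 2) = Real.arctan (2 * c / t) by ring,
      Real.tan_arctan]
  · have h2φ : 2 * (Real.arctan (2 * c / t) / 2) = Real.arctan (2 * c / t) := by ring
    have hsqrt : Real.sqrt (1 + (2 * c / t) ^ 2) = S / t := by
      rw [show 1 + (2 * c / t) ^ 2 = (t ^ 2 + 4 * c ^ 2) / t ^ 2 by
        field_simp; ring]
      rw [Real.sqrt_div (by positivity), Real.sqrt_sq ht.le]
    have hcos2 : Real.cos (2 * (Real.arctan (2 * c / t) / 2)) = t / S := by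
      rw [h2φ, Real.cos_arctan, hsqrt]
      field_simp
    have hsin2 : Real.sin (2 * (Real.arctan (2 * c / t) / 2)) = 2 * c / S := by
      rw [h2φ, Real.sin_arctan, hsqrt]
      field_simp
    set φ := Real.arctan (2 * c / t) / 2 with hφdef
    have hc2 : Real.cos φ ^ 2 - Real.sin φ ^ 2 = t / S := by
      rw [← Real.cos_two_mul']; exact hcos2
    have hs2 : 2 * (Real.sin φ * Real.cos φ) = 2 * c / S := by
      rw [show 2 * (Real.sin φ * Real.cos φ) = Real.sin (2 * φ) by
        rw [Real.sin_two_mul]; ring]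
      exact hsin2
    have hpyth : Real.sin φ ^ 2 + Real.cos φ ^ 2 = 1 := Real.sin_sq_add_cos_sq φ
    have hc2' : S * (Real.cos φ ^ 2 - Real.sin φ ^ 2) = t := by
      rw [hc2]; field_simp
    have hs2' : S * (2 * (Real.sin φ * Real.cos φ)) = 2 * c := by
      rw [hs2]; field_simp
    have hdiag : Matrix.diagonal ![(S + (a - d)) / 2, (S - (a - d)) / 2] =
        !![(S + (a - d)) / 2, 0; 0, (S - (a - d)) / 2] := by
      ext i j
      fin_cases i <;> fin_cases j <;> simp [Matrix.diagonal]
    rw [hdiag]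
    ext i j
    fin_cases i <;> fin_cases j <;>
      simp [Matrix.mul_apply, Fin.sum_univ_succ] <;>
      nlinarith [hc2', hs2', hpyth, hS, hS2]
end

section
/- Let α > 0 and θ ∈ [−π/2, π/2]. Then there exist β ≥ 0 and φ ∈ [−π/4, π/4] with sinh β = sinh(2α)·cos θ and tan(2φ) = tan θ / cosh(2α) such that diag(e^α, e^{−α}) · r_θ · diag(e^α, e^{−α}) = r_φ · diag(e^β, e^{−β}) · r_φ, where r_θ is the 2×2 rotation matrix by angle θ. -/
open Real Matrix

set_option maxHeartbeats 1000000

/-- For α > 0 and θ ∈ [−π/2, π/2], there are β ≥ 0 and φ ∈ [−π/4, π/4] with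
sinh β = sinh(2α)·cos θ and tan(2φ) = tan θ / cosh(2α) (with the convention
2φ = ±π/2 for θ = ±π/2) such that
diag(e^α, e^{−α}) · r_θ · diag(e^α, e^{−α}) = r_φ · diag(e^β, e^{−β}) · r_φ. -/
theorem polar_decomposition_in_SL2 (α θ : ℝ) (hα : 0 < α)
    (hθ : θ ∈ Set.Icc (-(π / 2)) (π / 2)) :
    ∃ β φ : ℝ, 0 ≤ β ∧ φ ∈ Set.Icc (-(π / 4)) (π / 4) ∧
      Real.sinh β = Real.sinh (2 * α) * Real.cos θ ∧
      ((|θ| < π / 2 → Real.tan (2 * φ) = Real.tan θ / Real.cosh (2 * α)) ∧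
        (θ = π / 2 → φ = π / 4) ∧ (θ = -(π / 2) → φ = -(π / 4))) ∧
      Matrix.diagonal ![Real.exp α, Real.exp (-α)] *
          !![Real.cos θ, -Real.sin θ; Real.sin θ, Real.cos θ] *
          Matrix.diagonal ![Real.exp α, Real.exp (-α)] =
        !![Real.cos φ, -Real.sin φ; Real.sin φ, Real.cos φ] *
          Matrix.diagonal ![Real.exp β, Real.exp (-β)] *
          !![Real.cos φ, -Real.sin φ; Real.sin φ, Real.cos φ] := by
  obtain ⟨hθ1, hθ2⟩ := hθ
  have hcosθ : 0 ≤ Real.cos θ := Real.cos_nonneg_of_mem_Icc ⟨by linarith, hθ2⟩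
  have hsinh2α : 0 ≤ Real.sinh (2 * α) := Real.sinh_nonneg_iff.mpr (by linarith)
  set β := Real.arsinh (Real.sinh (2 * α) * Real.cos θ) with hβdef
  have hsinhβ : Real.sinh β = Real.sinh (2 * α) * Real.cos θ := Real.sinh_arsinh _
  have hβ0 : 0 ≤ β := Real.arsinh_nonneg_iff.mpr (mul_nonneg hsinh2α hcosθ)
  have hcoshβ1 : 1 ≤ Real.cosh β := Real.one_le_cosh β
  have hcoshβpos : 0 < Real.cosh β := by linarith
  have hcoshβsq : Real.cosh β ^ 2 = 1 + (Real.sinh (2 * α) * Real.cos θ) ^ 2 := by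
    rw [Real.cosh_sq, hsinhβ]; ring
  set t := Real.sin θ / Real.cosh β with htdef
  have habs : |Real.sin θ| ≤ 1 := Real.abs_sin_le_one θ
  have ht1 : -1 ≤ t := by
    rw [htdef, le_div_iff₀ hcoshβpos]
    nlinarith [abs_le.mp habs]
  have ht2 : t ≤ 1 := by
    rw [htdef, div_le_one hcoshβpos]
    nlinarith [abs_le.mp habs]
  set φ := Real.arcsin t / 2 with hφdef
  have h2φ : 2 * φ = Real.arcsin t := by rw [hφdef]; ring
  have hsin2φ : Real.sin (2 * φ) = t := by rw [h2φ, Real.sin_arcsin ht1 ht2]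
  have hcos2φ : Real.cos (2 * φ) = Real.cosh (2 * α) * Real.cos θ / Real.cosh β := by
    rw [h2φ, Real.cos_arcsin]
    have hy : 0 ≤ Real.cosh (2 * α) * Real.cos θ / Real.cosh β :=
      div_nonneg (mul_nonneg (Real.cosh_pos _).le hcosθ) hcoshβpos.le
    have hsq : 1 - t ^ 2 = (Real.cosh (2 * α) * Real.cos θ / Real.cosh β) ^ 2 := by
      rw [htdef]
      field_simp
      nlinarith [Real.sin_sq_add_cos_sq θ, Real.cosh_sq (2 * α), hcoshβsq]
    rw [hsq, Real.sqrt_sq hy]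
  -- key multiplicative forms
  have h1 : Real.cosh β * Real.sin (2 * φ) = Real.sin θ := by
    rw [hsin2φ, htdef]; field_simp
  have h2 : Real.cosh β * Real.cos (2 * φ) = Real.cosh (2 * α) * Real.cos θ := by
    rw [hcos2φ]; field_simp
  refine ⟨β, φ, hβ0, ?_, hsinhβ, ⟨?_, ?_, ?_⟩, ?_⟩
  · constructor
    · have := Real.neg_pi_div_two_le_arcsin t
      rw [hφdef]; linarith
    · have := Real.arcsin_le_pi_div_two t
      rw [hφdef]; linarith
  · intro hlt
    have hcospos : 0 < Real.cos θ := Real.cos_pos_of_mem_Ioo (abs_lt.mp hlt |> fun h => ⟨h.1, h.2⟩)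
    rw [Real.tan_eq_sin_div_cos, Real.tan_eq_sin_div_cos, hsin2φ, hcos2φ, htdef]
    have hc2α : Real.cosh (2 * α) ≠ 0 := (Real.cosh_pos _).ne'
    rw [div_div_div_eq, div_div]
    rw [div_eq_div_iff (by positivity) (mul_ne_zero hcospos.ne' hc2α)]
    ring
  · intro h
    rw [hφdef, htdef, hβdef, h]
    simp [Real.arcsin_one]
    ring
  · intro h
    rw [hφdef, htdef, hβdef, h]
    simp [Real.arcsin_neg, Real.arcsin_one]
    ring
  · have hexpβ : Real.exp β = Real.cosh β + Real.sinh β := (Real.cosh_add_sinh β).symm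
    have hexpnβ : Real.exp (-β) = Real.cosh β - Real.sinh β := (Real.cosh_sub_sinh β).symm
    have hexp2α : Real.exp α * Real.exp α = Real.cosh (2 * α) + Real.sinh (2 * α) := by
      rw [← Real.exp_add, Real.cosh_add_sinh]; ring_nf
    have hexpn2α : Real.exp (-α) * Real.exp (-α) = Real.cosh (2 * α) - Real.sinh (2 * α) := by
      rw [← Real.exp_add, Real.cosh_sub_sinh]; ring_nf
    have hs2 : Real.sin (2 * φ) = 2 * Real.sin φ * Real.cos φ := Real.sin_two_mul φ
    have hc2 : Real.cos (2 * φ) = 2 * Real.cos φ ^ 2 - 1 := Real.cos_two_mul φ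
    have hpyth : Real.sin φ ^ 2 + Real.cos φ ^ 2 = 1 := Real.sin_sq_add_cos_sq φ
    rw [hs2] at h1; rw [hc2] at h2
    have hdiag : ∀ a b : ℝ, Matrix.diagonal ![a, b] = !![a, 0; 0, b] := by
      intro a b
      ext i j
      fin_cases i <;> fin_cases j <;> simp [Matrix.diagonal]
    simp only [hdiag]
    rw [Matrix.mul_fin_two, Matrix.mul_fin_two, Matrix.mul_fin_two,
      Matrix.mul_fin_two]
    have hexpaa : Real.exp α * Real.exp (-α) = 1 := by
      rw [← Real.exp_add]; simp
    ext i j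
    fin_cases i <;> fin_cases j <;> simp
    · linear_combination Real.cos θ * hexp2α - Real.cos φ ^ 2 * hexpβ +
        Real.sin φ ^ 2 * hexpnβ - h2 - hsinhβ + (Real.cosh β - Real.sinh β) * hpyth
    · linear_combination -Real.sin θ * hexpaa +
        (Real.sin φ * Real.cos φ) * (hexpβ + hexpnβ) + h1
    · linear_combination Real.sin θ * hexpaa -
        (Real.sin φ * Real.cos φ) * (hexpβ + hexpnβ) - h1
    · linear_combination Real.cos θ * hexpn2α + Real.sin φ ^ 2 * hexpβ -
        Real.cos φ ^ 2 * hexpnβ - h2 + hsinhβ + (Real.cosh β + Real.sinh β) * hpyth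
end

section
/- For α > 0 and θ ∈ [−π/2, π/2], let X = D(α, 0)·ι(u_θ)·D(α, 0) in Sp(2, ℝ), where D(α, 0) = diag(e^α, 1, e^{−α}, 1) and u_θ = (1/√2)·(e^{iθ}, −1; 1, e^{−iθ}) ∈ SU(2). If β ≥ γ ≥ 0 are such that X ∈ K·D(β, γ)·K (the KAK decomposition), then sinh β · sinh γ = (1/2)·sinh²(α) and sinh β − sinh γ = (1/√2)·sinh(2α)·cos θ. -/
open Matrix Real

/-- ι : M₂(ℂ) → M₄(ℝ), ι(A + iB) = (A, −B; B, A). -/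
noncomputable def iota (X : Matrix (Fin 2) (Fin 2) ℂ) : Matrix (Fin 4) (Fin 4) ℝ :=
  Matrix.reindex (finSumFinEquiv : Fin 2 ⊕ Fin 2 ≃ Fin 4) (finSumFinEquiv : Fin 2 ⊕ Fin 2 ≃ Fin 4)
    (Matrix.fromBlocks (X.map Complex.re) (-(X.map Complex.im))
      (X.map Complex.im) (X.map Complex.re))

/-- D(β,γ) = diag(e^β, e^γ, e^{−β}, e^{−γ}). -/
noncomputable def Dmat (β γ : ℝ) : Matrix (Fin 4) (Fin 4) ℝ :=
  Matrix.diagonal ![Real.exp β, Real.exp γ, Real.exp (-β), Real.exp (-γ)]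

/-- K = ι(U(2)). -/
noncomputable def Kgrp : Set (Matrix (Fin 4) (Fin 4) ℝ) :=
  iota '' {X | X ∈ Matrix.unitaryGroup (Fin 2) ℂ}

/-- u_θ = (1/√2)·(e^{iθ}, −1; 1, e^{−iθ}) ∈ SU(2). -/
noncomputable def umat (θ : ℝ) : Matrix (Fin 2) (Fin 2) ℂ :=
  ((1 / Real.sqrt 2 : ℝ) : ℂ) •
    !![Complex.exp (Complex.I * θ), -1; 1, Complex.exp (-(Complex.I * θ))]

lemma map_re_mul (X Y : Matrix (Fin 2) (Fin 2) ℂ) :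
    (X * Y).map Complex.re = X.map Complex.re * Y.map Complex.re - X.map Complex.im * Y.map Complex.im := by
  ext i j
  simp [Matrix.mul_apply, Complex.mul_re, Finset.sum_sub_distrib]
  ring

lemma map_im_mul (X Y : Matrix (Fin 2) (Fin 2) ℂ) :
    (X * Y).map Complex.im = X.map Complex.re * Y.map Complex.im + X.map Complex.im * Y.map Complex.re := by
  ext i j
  simp [Matrix.mul_apply, Complex.mul_im, Finset.sum_add_distrib]
  ring

lemma iota_mul (X Y : Matrix (Fin 2) (Fin 2) ℂ) : iota (X * Y) = iota X * iota Y := by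
  unfold iota
  rw [Matrix.reindex_apply, Matrix.reindex_apply, Matrix.reindex_apply,
    Matrix.submatrix_mul_equiv, Matrix.fromBlocks_multiply]
  congr 1
  rw [map_re_mul, map_im_mul]
  congr 1 <;> first
    | ((try simp only [Matrix.neg_mul, Matrix.mul_neg]); abel)
    | (congr 1 <;> first
        | ((try simp only [Matrix.neg_mul, Matrix.mul_neg]); abel)
        | (congr 1 <;> ((try simp only [Matrix.neg_mul, Matrix.mul_neg]); abel)))

lemma iota_transpose (X : Matrix (Fin 2) (Fin 2) ℂ) : (iota X)ᵀ = iota Xᴴ := by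
  unfold iota
  rw [Matrix.reindex_apply, Matrix.reindex_apply, Matrix.transpose_submatrix,
    Matrix.fromBlocks_transpose]
  have h1 : Xᴴ.map Complex.re = (X.map Complex.re)ᵀ := by
    ext i j; simp [Matrix.conjTranspose_apply]
  have h2 : Xᴴ.map Complex.im = -(X.map Complex.im)ᵀ := by
    ext i j; simp [Matrix.conjTranspose_apply]
  rw [h1, h2]
  simp

lemma iota_one : iota 1 = 1 := by
  unfold iota
  have h1 : (1 : Matrix (Fin 2) (Fin 2) ℂ).map Complex.re = 1 := by
    ext i j; by_cases h : i = j <;> simp [Matrix.one_apply, h]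
  have h2 : (1 : Matrix (Fin 2) (Fin 2) ℂ).map Complex.im = 0 := by
    ext i j; by_cases h : i = j <;> simp [Matrix.one_apply, h]
  rw [h1, h2, Matrix.reindex_apply]
  simp [Matrix.fromBlocks_one]

lemma K_ortho {k : Matrix (Fin 4) (Fin 4) ℝ} (hk : k ∈ Kgrp) : kᵀ * k = 1 ∧ k * kᵀ = 1 := by
  obtain ⟨U, hU, rfl⟩ := hk
  have hU' : U ∈ Matrix.unitaryGroup (Fin 2) ℂ := hU
  constructor
  · rw [iota_transpose, ← iota_mul, ← Matrix.star_eq_conjTranspose, hU'.1, iota_one]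
  · rw [iota_transpose, ← iota_mul, ← Matrix.star_eq_conjTranspose, hU'.2, iota_one]

lemma XtX_eq {A k₁ k₂ X : Matrix (Fin 4) (Fin 4) ℝ} (h : X = k₁ * A * k₂)
    (h1 : k₁ᵀ * k₁ = 1) : Xᵀ * X = k₂ᵀ * (Aᵀ * A) * k₂ := by
  subst h
  rw [Matrix.transpose_mul, Matrix.transpose_mul]
  have : (k₁ * A * k₂) = k₁ * (A * k₂) := by rw [Matrix.mul_assoc]
  rw [this, Matrix.mul_assoc k₂ᵀ, Matrix.mul_assoc Aᵀ, ← Matrix.mul_assoc k₁ᵀ, h1,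
    Matrix.one_mul, ← Matrix.mul_assoc Aᵀ, ← Matrix.mul_assoc k₂ᵀ]

lemma trace_conj {M k : Matrix (Fin 4) (Fin 4) ℝ} (h2 : k * kᵀ = 1) :
    (kᵀ * M * k).trace = M.trace := by
  rw [Matrix.trace_mul_cycle, h2, Matrix.one_mul]

lemma sq_eq_nonneg {x y : ℝ} (hx : 0 ≤ x) (hy : 0 ≤ y) (h : x ^ 2 = y ^ 2) : x = y := by
  have h0 : (x - y) * (x + y) = 0 := by linear_combination h
  rcases mul_eq_zero.1 h0 with h' | h'
  · linarith
  · linarith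

lemma exp_sq_add (x : ℝ) (p : ℝ) (hp : p = Real.sinh x) :
    Real.exp x ^ 2 + Real.exp (-x) ^ 2 = 4 * p ^ 2 + 2 := by
  subst hp
  rw [Real.sinh_eq, Real.exp_neg]
  have h := Real.exp_ne_zero x
  field_simp
  ring

lemma exp_four_add (x : ℝ) (p : ℝ) (hp : p = Real.sinh x) :
    Real.exp x ^ 4 + Real.exp (-x) ^ 4 = 16 * p ^ 4 + 16 * p ^ 2 + 2 := by
  subst hp
  rw [Real.sinh_eq, Real.exp_neg]
  have h := Real.exp_ne_zero x
  field_simp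
  ring

lemma fse0 : ((finSumFinEquiv (m := 2) (n := 2)).symm) 0 = Sum.inl 0 := rfl
lemma fse1 : ((finSumFinEquiv (m := 2) (n := 2)).symm) 1 = Sum.inl 1 := rfl
lemma fse2 : ((finSumFinEquiv (m := 2) (n := 2)).symm) 2 = Sum.inr 0 := rfl
lemma fse3 : ((finSumFinEquiv (m := 2) (n := 2)).symm) 3 = Sum.inr 1 := rfl

lemma iota_umat (θ : ℝ) : iota (umat θ) =
    (Real.sqrt 2)⁻¹ • !![Real.cos θ, -1, -Real.sin θ, 0;
                          (1:ℝ), Real.cos θ, 0, Real.sin θ;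
                          Real.sin θ, 0, Real.cos θ, -1;
                          0, -Real.sin θ, 1, Real.cos θ] := by
  have hs : Real.sqrt 2 / 2 = (Real.sqrt 2)⁻¹ := by
    rw [eq_comm, inv_eq_iff_eq_inv, inv_div, eq_div_iff (Real.sqrt_ne_zero'.mpr (by norm_num) : Real.sqrt 2 ≠ 0)]
    nlinarith [Real.mul_self_sqrt (by norm_num : (0:ℝ) ≤ 2)]
  ext i j
  fin_cases i <;> fin_cases j <;>
    simp [iota, umat, Matrix.reindex_apply, Matrix.submatrix_apply,
      fse0, fse1, fse2, fse3, Complex.exp_re, Complex.exp_im,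
      Complex.mul_re, Complex.mul_im, one_div, hs]

noncomputable def Nmat (α θ : ℝ) : Matrix (Fin 4) (Fin 4) ℝ :=
  !![Real.exp α * Real.exp α * Real.cos θ, -Real.exp α, -(Real.exp α * Real.exp (-α) * Real.sin θ), 0;
     Real.exp α, Real.cos θ, 0, Real.sin θ;
     Real.exp α * Real.exp (-α) * Real.sin θ, 0, Real.exp (-α) * Real.exp (-α) * Real.cos θ, -Real.exp (-α);
     0, -Real.sin θ, Real.exp (-α), Real.cos θ]

lemma hXmat (α θ : ℝ) :
    Dmat α 0 * iota (umat θ) * Dmat α 0 = (Real.sqrt 2)⁻¹ • Nmat α θ := by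
  rw [iota_umat, Matrix.mul_smul, Matrix.smul_mul]
  congr 1
  ext i j
  fin_cases i <;> fin_cases j <;>
    simp [Dmat, Nmat, Matrix.mul_apply, Fin.sum_univ_four] <;> ring

set_option maxHeartbeats 1600000 in
lemma trN1 (α θ : ℝ) : ((Nmat α θ)ᵀ * Nmat α θ).trace =
    2*Real.sin θ^2 + 2*Real.cos θ^2 + 2*Real.exp (-α)^2 + Real.exp (-α)^4*Real.cos θ^2
      + 2*Real.exp α^2 + 2*Real.exp α^2*Real.exp (-α)^2*Real.sin θ^2 + Real.exp α^4*Real.cos θ^2 := by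
  simp only [Nmat, Matrix.trace, Matrix.diag, Matrix.mul_apply, Matrix.transpose_apply, Fin.sum_univ_four, Matrix.of_apply, Matrix.cons_val', Matrix.cons_val_zero, Matrix.cons_val_one, Matrix.cons_val_two, Matrix.cons_val_three, Matrix.head_cons, Matrix.head_fin_const, Matrix.empty_val', Matrix.cons_val_fin_one, Matrix.cons_val_succ, Matrix.vecHead, Matrix.vecTail, Function.comp]
  ring

set_option maxHeartbeats 3200000 in
lemma trN2 (α θ : ℝ) : (((Nmat α θ)ᵀ * Nmat α θ) * ((Nmat α θ)ᵀ * Nmat α θ)).trace =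
    2*Real.sin θ^4 + 4*Real.cos θ^2*Real.sin θ^2 + 2*Real.cos θ^4
      + 4*Real.exp (-α)^2*Real.sin θ^2 + 4*Real.exp (-α)^2*Real.cos θ^2 + 2*Real.exp (-α)^4
      - 4*Real.exp (-α)^4*Real.cos θ^2 + 4*Real.exp (-α)^6*Real.cos θ^2 + Real.exp (-α)^8*Real.cos θ^4
      + 4*Real.exp α^2*Real.sin θ^2 + 4*Real.exp α^2*Real.cos θ^2
      - 8*Real.exp α^2*Real.exp (-α)^2*Real.sin θ^2 + 4*Real.exp α^2*Real.exp (-α)^4*Real.sin θ^2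
      + 4*Real.exp α^2*Real.exp (-α)^6*Real.cos θ^2*Real.sin θ^2 + 2*Real.exp α^4
      - 4*Real.exp α^4*Real.cos θ^2 + 4*Real.exp α^4*Real.exp (-α)^2*Real.sin θ^2
      + 2*Real.exp α^4*Real.exp (-α)^4*Real.sin θ^4 - 4*Real.exp α^4*Real.exp (-α)^4*Real.cos θ^2*Real.sin θ^2
      + 4*Real.exp α^6*Real.cos θ^2 + 4*Real.exp α^6*Real.exp (-α)^2*Real.cos θ^2*Real.sin θ^2
      + Real.exp α^8*Real.cos θ^4 := by
  simp only [Nmat, Matrix.trace, Matrix.diag, Matrix.mul_apply, Matrix.transpose_apply, Fin.sum_univ_four, Matrix.of_apply, Matrix.cons_val', Matrix.cons_val_zero, Matrix.cons_val_one, Matrix.cons_val_two, Matrix.cons_val_three, Matrix.head_cons, Matrix.head_fin_const, Matrix.empty_val', Matrix.cons_val_fin_one, Matrix.cons_val_succ, Matrix.vecHead, Matrix.vecTail, Function.comp]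
  ring

set_option maxHeartbeats 1600000 in
lemma trD1 (β γ p q : ℝ) (hp : p = Real.sinh β) (hq : q = Real.sinh γ) :
    ((Dmat β γ)ᵀ * Dmat β γ).trace = 4*p^2 + 4*q^2 + 4 := by
  have h1 := exp_sq_add β p hp
  have h2 := exp_sq_add γ q hq
  simp [Dmat, Matrix.trace, Matrix.mul_apply, Fin.sum_univ_four, Matrix.diag, Matrix.diagonal]
  nlinarith [h1, h2]

set_option maxHeartbeats 1600000 in
lemma trD2 (β γ p q : ℝ) (hp : p = Real.sinh β) (hq : q = Real.sinh γ) :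
    (((Dmat β γ)ᵀ * Dmat β γ) * ((Dmat β γ)ᵀ * Dmat β γ)).trace
      = 16*p^4 + 16*q^4 + 16*p^2 + 16*q^2 + 4 := by
  have h1 := exp_four_add β p hp
  have h2 := exp_four_add γ q hq
  simp [Dmat, Matrix.trace, Matrix.mul_apply, Fin.sum_univ_four, Matrix.diag, Matrix.diagonal]
  nlinarith [h1, h2]

set_option maxHeartbeats 4000000 in
/-- If X = D(α,0)·ι(u_θ)·D(α,0) has KAK decomposition X ∈ K·D(β,γ)·K with
β ≥ γ ≥ 0, then sinh β·sinh γ = (1/2)·sinh²α and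
sinh β − sinh γ = (1/√2)·sinh(2α)·cos θ. -/
theorem structural_U1 (α θ β γ : ℝ) (hα : 0 < α)
    (hθ : θ ∈ Set.Icc (-(π / 2)) (π / 2)) (hβγ : γ ≤ β) (hγ : 0 ≤ γ)
    (hKAK : ∃ k₁ ∈ Kgrp, ∃ k₂ ∈ Kgrp,
      Dmat α 0 * iota (umat θ) * Dmat α 0 = k₁ * Dmat β γ * k₂) :
    Real.sinh β * Real.sinh γ = (1 / 2) * Real.sinh α ^ 2 ∧
      Real.sinh β - Real.sinh γ = (1 / Real.sqrt 2) * Real.sinh (2 * α) * Real.cos θ := by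
  obtain ⟨k₁, hk₁, k₂, hk₂, hX⟩ := hKAK
  have hk₁o := (K_ortho hk₁).1
  have hk₂o := (K_ortho hk₂).2
  -- trace transfer
  have hXtX : (Dmat α 0 * iota (umat θ) * Dmat α 0)ᵀ * (Dmat α 0 * iota (umat θ) * Dmat α 0)
      = k₂ᵀ * ((Dmat β γ)ᵀ * Dmat β γ) * k₂ := XtX_eq hX hk₁o
  have hsq : (k₂ᵀ * ((Dmat β γ)ᵀ * Dmat β γ) * k₂) * (k₂ᵀ * ((Dmat β γ)ᵀ * Dmat β γ) * k₂)
      = k₂ᵀ * (((Dmat β γ)ᵀ * Dmat β γ) * ((Dmat β γ)ᵀ * Dmat β γ)) * k₂ := by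
    have h' : k₂ * (k₂ᵀ * ((Dmat β γ)ᵀ * (Dmat β γ * k₂))) = (Dmat β γ)ᵀ * (Dmat β γ * k₂) := by
      rw [← Matrix.mul_assoc k₂ k₂ᵀ, hk₂o, Matrix.one_mul]
    simp only [Matrix.mul_assoc, h']
  have t1 : ((Dmat α 0 * iota (umat θ) * Dmat α 0)ᵀ * (Dmat α 0 * iota (umat θ) * Dmat α 0)).trace
      = ((Dmat β γ)ᵀ * Dmat β γ).trace := by rw [hXtX, trace_conj hk₂o]
  have t2 : (((Dmat α 0 * iota (umat θ) * Dmat α 0)ᵀ * (Dmat α 0 * iota (umat θ) * Dmat α 0))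
        * ((Dmat α 0 * iota (umat θ) * Dmat α 0)ᵀ * (Dmat α 0 * iota (umat θ) * Dmat α 0))).trace
      = (((Dmat β γ)ᵀ * Dmat β γ) * ((Dmat β γ)ᵀ * Dmat β γ)).trace := by
    rw [hXtX, hsq, trace_conj hk₂o]
  -- LHS via N
  have hww : (Real.sqrt 2)⁻¹ * (Real.sqrt 2)⁻¹ = 2⁻¹ := by
    rw [← mul_inv, Real.mul_self_sqrt (by norm_num : (0:ℝ) ≤ 2)]
  have hsm : (Dmat α 0 * iota (umat θ) * Dmat α 0)ᵀ * (Dmat α 0 * iota (umat θ) * Dmat α 0)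
      = (2⁻¹ : ℝ) • ((Nmat α θ)ᵀ * Nmat α θ) := by
    rw [hXmat, Matrix.transpose_smul, Matrix.smul_mul, Matrix.mul_smul, smul_smul, hww]
  have hL1 : ((Dmat α 0 * iota (umat θ) * Dmat α 0)ᵀ * (Dmat α 0 * iota (umat θ) * Dmat α 0)).trace
      = 2⁻¹ * ((Nmat α θ)ᵀ * Nmat α θ).trace := by
    rw [hsm, Matrix.trace_smul, smul_eq_mul]
  have hL2 : (((Dmat α 0 * iota (umat θ) * Dmat α 0)ᵀ * (Dmat α 0 * iota (umat θ) * Dmat α 0))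
        * ((Dmat α 0 * iota (umat θ) * Dmat α 0)ᵀ * (Dmat α 0 * iota (umat θ) * Dmat α 0))).trace
      = 4⁻¹ * (((Nmat α θ)ᵀ * Nmat α θ) * ((Nmat α θ)ᵀ * Nmat α θ)).trace := by
    rw [hsm, Matrix.smul_mul, Matrix.mul_smul, smul_smul, Matrix.trace_smul, smul_eq_mul]
    norm_num
  have hD1 := trD1 β γ (Real.sinh β) (Real.sinh γ) rfl rfl
  have hD2 := trD2 β γ (Real.sinh β) (Real.sinh γ) rfl rfl
  have hN1 := trN1 α θ
  have hN2 := trN2 α θ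
  have h1 : (2*(Real.sin θ)^2 + 2*(Real.cos θ)^2 + 2*(Real.exp (-α))^2 + (Real.exp (-α))^4*(Real.cos θ)^2 + 2*(Real.exp α)^2 + 2*(Real.exp α)^2*(Real.exp (-α))^2*(Real.sin θ)^2 + (Real.exp α)^4*(Real.cos θ)^2)
      = 8*(Real.sinh β)^2 + 8*(Real.sinh γ)^2 + 8 := by
    rw [← hN1]
    have := t1
    rw [hL1, hD1] at this
    linarith
  have h2 : (2*(Real.sin θ)^4 + 4*(Real.cos θ)^2*(Real.sin θ)^2 + 2*(Real.cos θ)^4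
      + 4*(Real.exp (-α))^2*(Real.sin θ)^2 + 4*(Real.exp (-α))^2*(Real.cos θ)^2 + 2*(Real.exp (-α))^4
      - 4*(Real.exp (-α))^4*(Real.cos θ)^2 + 4*(Real.exp (-α))^6*(Real.cos θ)^2 + (Real.exp (-α))^8*(Real.cos θ)^4
      + 4*(Real.exp α)^2*(Real.sin θ)^2 + 4*(Real.exp α)^2*(Real.cos θ)^2
      - 8*(Real.exp α)^2*(Real.exp (-α))^2*(Real.sin θ)^2 + 4*(Real.exp α)^2*(Real.exp (-α))^4*(Real.sin θ)^2
      + 4*(Real.exp α)^2*(Real.exp (-α))^6*(Real.cos θ)^2*(Real.sin θ)^2 + 2*(Real.exp α)^4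
      - 4*(Real.exp α)^4*(Real.cos θ)^2 + 4*(Real.exp α)^4*(Real.exp (-α))^2*(Real.sin θ)^2
      + 2*(Real.exp α)^4*(Real.exp (-α))^4*(Real.sin θ)^4 - 4*(Real.exp α)^4*(Real.exp (-α))^4*(Real.cos θ)^2*(Real.sin θ)^2
      + 4*(Real.exp α)^6*(Real.cos θ)^2 + 4*(Real.exp α)^6*(Real.exp (-α))^2*(Real.cos θ)^2*(Real.sin θ)^2
      + (Real.exp α)^8*(Real.cos θ)^4)
      = 64*(Real.sinh β)^4 + 64*(Real.sinh γ)^4 + 64*(Real.sinh β)^2 + 64*(Real.sinh γ)^2 + 16 := by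
    rw [← hN2]
    have := t2
    rw [hL2, hD2] at this
    linarith
  have hab : Real.exp α * Real.exp (-α) = 1 := by
    rw [← Real.exp_add]; simp
  have hcs : Real.cos θ ^ 2 + Real.sin θ ^ 2 = 1 := by
    rw [add_comm]; exact Real.sin_sq_add_cos_sq θ
  have hq0 : 0 ≤ Real.sinh γ := by
    rw [← Real.sinh_zero]; exact Real.sinh_le_sinh.mpr hγ
  have hpq0 : Real.sinh γ ≤ Real.sinh β := Real.sinh_le_sinh.mpr hβγ
  have hp0 : 0 ≤ Real.sinh β := le_trans hq0 hpq0
  have hpqsq : ((Real.sinh β) * (Real.sinh γ))^2 = (((Real.exp α) - (Real.exp (-α)))^2/8)^2 := by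
    linear_combination (-(1:ℝ)/128) * ((2*(Real.sin θ)^2 + 2*(Real.cos θ)^2 + 2*(Real.exp (-α))^2 + (Real.exp (-α))^4*(Real.cos θ)^2 + 2*(Real.exp α)^2 + 2*(Real.exp α)^2*(Real.exp (-α))^2*(Real.sin θ)^2 + (Real.exp α)^4*(Real.cos θ)^2) + 8*(Real.sinh β)^2 + 8*(Real.sinh γ)^2 + 8 - 16) * h1
      + (1/128) * h2 - (1/16) * h1 + (-1/32 - 1/16*(Real.sin θ)^2 + 5/64*(Real.sin θ)^4 + 3/32*(Real.cos θ)^2*(Real.sin θ)^2 + 1/64*(Real.cos θ)^4 + 1/16*(Real.exp (-α))^2 + 1/32*(Real.exp (-α))^2*(Real.sin θ)^2 + 1/32*(Real.exp (-α))^2*(Real.cos θ)^2 - 1/32*(Real.exp α)*(Real.exp (-α)) - 1/16*(Real.exp α)*(Real.exp (-α))*(Real.sin θ)^2 + 5/64*(Real.exp α)*(Real.exp (-α))*(Real.sin θ)^4 + 3/32*(Real.exp α)*(Real.exp (-α))*(Real.cos θ)^2*(Real.sin θ)^2 + 1/64*(Real.exp α)*(Real.exp (-α))*(Real.cos θ)^4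 + 1/32*(Real.exp α)*(Real.exp (-α))^3*(Real.sin θ)^2 + 1/32*(Real.exp α)*(Real.exp (-α))^3*(Real.cos θ)^2 + 1/16*(Real.exp α)^2 + 1/32*(Real.exp α)^2*(Real.sin θ)^2 + 1/32*(Real.exp α)^2*(Real.cos θ)^2 + 1/64*(Real.exp α)^2*(Real.exp (-α))^2*(Real.sin θ)^4 + 1/32*(Real.exp α)^2*(Real.exp (-α))^2*(Real.cos θ)^2*(Real.sin θ)^2 + 1/64*(Real.exp α)^2*(Real.exp (-α))^2*(Real.cos θ)^4 + 1/32*(Real.exp α)^3*(Real.exp (-α))*(Real.sin θ)^2 + 1/32*(Real.exp α)^3*(Real.exp (-α))*(Real.cos θ)^2 + 1/64*(Real.exp α)^3*(Real.exp (-α))^3*(Real.sin θ)^4 + 1/32*(Real.exp α)^3*(Real.exp (-α))^3*(Real.cos θ)^2*(Real.sin θ)^2 + 1/64*(Real.exp α)^3*(Real.exp (-α))^3*(Real.cos θ)^4) * hab + (-3/32 + 3/32*(Real.sin θ)^2 + 1/32*(Real.cos θ)^2 + 1/16*(Real.exp (-α))^2 + 1/32*(Real.exp (-α))^4*(Real.cos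 θ)^2 + 1/16*(Real.exp α)^2 + 1/32*(Real.exp α)^4*(Real.cos θ)^2) * hcs
  have hpq : (Real.sinh β) * (Real.sinh γ) = ((Real.exp α) - (Real.exp (-α)))^2/8 := by
    apply sq_eq_nonneg (mul_nonneg hp0 hq0) (by positivity) hpqsq
  have goal1 : Real.sinh β * Real.sinh γ = (1 / 2) * Real.sinh α ^ 2 := by
    rw [Real.sinh_eq α]
    linear_combination hpq
  have hdsq : ((Real.sinh β) - (Real.sinh γ))^2 = (1/2)*(((Real.exp α)^2 - (Real.exp (-α))^2)/2)^2*(Real.cos θ)^2 := by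
    linear_combination (-(1:ℝ)/8) * h1 - 2 * hpq + (1/2 + 1/4*(Real.sin θ)^2 + 1/4*(Real.cos θ)^2 + 1/4*(Real.exp α)*(Real.exp (-α))*(Real.sin θ)^2 + 1/4*(Real.exp α)*(Real.exp (-α))*(Real.cos θ)^2) * hab + (1/2) * hcs
  have hsinh2 : Real.sinh (2*α) = ((Real.exp α)^2 - (Real.exp (-α))^2)/2 := by
    rw [Real.sinh_eq, show -(2*α) = (-α) + (-α) by ring, Real.exp_add,
      show 2*α = α + α by ring, Real.exp_add]
    ring
  have hc0 : 0 ≤ Real.cos θ := Real.cos_nonneg_of_mem_Icc hθ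
  have hba : (Real.exp (-α)) ≤ (Real.exp α) := Real.exp_le_exp.mpr (by linarith)
  have hb0 : (0:ℝ) < (Real.exp (-α)) := Real.exp_pos _
  have ht0 : 0 ≤ (1 / Real.sqrt 2) * (((Real.exp α)^2 - (Real.exp (-α))^2)/2) * (Real.cos θ) := by
    apply mul_nonneg (mul_nonneg (by positivity) (by nlinarith)) hc0
  have htsq : ((1 / Real.sqrt 2) * (((Real.exp α)^2 - (Real.exp (-α))^2)/2) * (Real.cos θ))^2
      = (1/2)*(((Real.exp α)^2 - (Real.exp (-α))^2)/2)^2*(Real.cos θ)^2 := by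
    rw [mul_pow, mul_pow, div_pow, one_pow, Real.sq_sqrt (by norm_num : (0:ℝ) ≤ 2)]
    try ring
  have goal2 : Real.sinh β - Real.sinh γ = (1 / Real.sqrt 2) * Real.sinh (2 * α) * Real.cos θ := by
    rw [hsinh2]
    exact sq_eq_nonneg (by linarith) ht0 (hdsq.trans htsq.symm)
  exact ⟨goal1, goal2⟩
end
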